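/- arXiv:2501.11941 — 5 statements merged into one kernel-verified Lean document; each statement's English description precedes it below -/
import Mathlib

section
/- Let A_0 = u v' be a rank-one matrix with v'u ≠ 0, and let w_0, w_1, …, w_r be nonempty words over an alphabet indexing matrices A_1,…,A_{m-1}, with t_0,…,t_r positive integers. Then the Frobenius norm of the product A_{w_0} A_0^{t_0} A_{w_1} A_0^{t_1} ⋯ A_{w_r} A_0^{t_r} equals |v'u|^{(∑_{j=0}^r t_j) - (r+1)} · (∏_{j=1}^r |v' A_{w_j} u|) · ‖A_{w_0} u‖₂ · ‖v‖₂, where A_w denotes the product of matrices A_{w_1}⋯A_{w_ℓ} for a word w = w_1⋯w_ℓ. -/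
open Matrix

/-- Frobenius norm of a complex matrix. -/
noncomputable def frobNorm {d : ℕ} (A : Matrix (Fin d) (Fin d) ℂ) : ℝ :=
  Real.sqrt (Matrix.trace (Aᴴ * A)).re

/-- Euclidean norm of a complex vector. -/
noncomputable def eucNorm {d : ℕ} (x : Fin d → ℂ) : ℝ :=
  Real.sqrt (∑ i, ‖x i‖ ^ 2)

lemma mul_vecMulVec' {d : ℕ} (B : Matrix (Fin d) (Fin d) ℂ) (x y : Fin d → ℂ) :
    B * vecMulVec x y = vecMulVec (B.mulVec x) y := by
  ext i j
  simp only [Matrix.mul_apply, vecMulVec_apply, Matrix.mulVec, dotProduct, Finset.sum_mul]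
  exact Finset.sum_congr rfl fun k _ => by ring

lemma vecMulVec_mul_vecMulVec' {d : ℕ} (x a b y : Fin d → ℂ) :
    vecMulVec x a * vecMulVec b y = (a ⬝ᵥ b) • vecMulVec x y := by
  ext i j
  simp only [Matrix.mul_apply, vecMulVec_apply, Matrix.smul_apply, dotProduct, smul_eq_mul,
    Finset.sum_mul]
  exact Finset.sum_congr rfl fun k _ => by ring

lemma vecMulVec_pow_aux {d : ℕ} (u v : Fin d → ℂ) (n : ℕ) :
    (vecMulVec u v) ^ (n + 1) = (v ⬝ᵥ u) ^ n • vecMulVec u v := by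
  induction n with
  | zero => simp
  | succ n ih =>
    rw [pow_succ, ih, Algebra.smul_mul_assoc, vecMulVec_mul_vecMulVec', smul_smul, ← pow_succ]

lemma vecMulVec_pow {d : ℕ} (u v : Fin d → ℂ) (t : ℕ) (ht : 1 ≤ t) :
    (vecMulVec u v) ^ t = (v ⬝ᵥ u) ^ (t - 1) • vecMulVec u v := by
  obtain ⟨n, rfl⟩ : ∃ n, t = n + 1 := ⟨t - 1, by omega⟩
  simpa using vecMulVec_pow_aux u v n

lemma prod_word {d : ℕ} (u v : Fin d → ℂ) :
    ∀ (n : ℕ) (B : Fin (n + 1) → Matrix (Fin d) (Fin d) ℂ) (t : Fin (n + 1) → ℕ),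
    (∀ j, 1 ≤ t j) →
    (List.ofFn fun j : Fin (n + 1) => B j * (vecMulVec u v) ^ (t j)).prod =
      ((∏ j, (v ⬝ᵥ u) ^ (t j - 1)) * ∏ j : Fin n, (v ⬝ᵥ (B j.succ).mulVec u)) •
        vecMulVec ((B 0).mulVec u) v := by
  intro n
  induction n with
  | zero =>
    intro B t ht
    simp only [List.ofFn_succ, List.ofFn_zero, List.prod_cons, List.prod_nil, mul_one,
      Finset.univ_eq_empty, Finset.prod_empty, Fin.prod_univ_one]
    rw [vecMulVec_pow u v _ (ht 0), Matrix.mul_smul, mul_vecMulVec']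
    rw [Fin.prod_univ_one]
  | succ n ih =>
    intro B t ht
    rw [List.ofFn_succ, List.prod_cons]
    rw [ih (fun j => B j.succ) (fun j => t j.succ) (fun j => ht j.succ)]
    rw [vecMulVec_pow u v _ (ht 0)]
    rw [mul_smul_comm]
    rw [mul_smul_comm]
    rw [smul_mul_assoc]
    rw [Matrix.mul_assoc]
    rw [vecMulVec_mul_vecMulVec']
    rw [mul_smul_comm]
    rw [mul_vecMulVec']
    rw [smul_smul, smul_smul]
    congr 1
    rw [Fin.prod_univ_succ (fun j => (v ⬝ᵥ u) ^ (t j - 1)),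
      Fin.prod_univ_succ (fun j : Fin (n+1) => v ⬝ᵥ (B j.succ).mulVec u)]
    ring

lemma frob_smul_vecMulVec {d : ℕ} (z : ℂ) (x y : Fin d → ℂ) :
    frobNorm (z • vecMulVec x y) = ‖z‖ * eucNorm x * eucNorm y := by
  have hx : (0:ℝ) ≤ ∑ i, ‖x i‖ ^ 2 := by positivity
  have hy : (0:ℝ) ≤ ∑ i, ‖y i‖ ^ 2 := by positivity
  have htr : (Matrix.trace ((z • vecMulVec x y)ᴴ * (z • vecMulVec x y))).re =
      ‖z‖ ^ 2 * ((∑ i, ‖x i‖ ^ 2) * (∑ j, ‖y j‖ ^ 2)) := by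
    have h1 : ∀ i j : Fin d, ((starRingEnd ℂ) ((z • vecMulVec x y) j i) *
        (z • vecMulVec x y) j i) =
        ((‖z‖ ^ 2 * (‖x j‖ ^ 2 * ‖y i‖ ^ 2) : ℝ) : ℂ) := by
      intro i j
      rw [Complex.conj_mul']
      simp only [Matrix.smul_apply, vecMulVec_apply, smul_eq_mul, norm_mul]
      push_cast
      ring
    rw [Matrix.trace]
    simp only [Matrix.diag_apply, Matrix.mul_apply, Matrix.conjTranspose_apply, Complex.star_def]
    rw [Complex.re_sum]
    have : ∀ i : Fin d, (∑ j, (starRingEnd ℂ) ((z • vecMulVec x y) j i) *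
        (z • vecMulVec x y) j i).re =
        ∑ j, ‖z‖ ^ 2 * (‖x j‖ ^ 2 * ‖y i‖ ^ 2) := by
      intro i
      rw [Complex.re_sum]
      exact Finset.sum_congr rfl fun j _ => by rw [h1 i j, Complex.ofReal_re]
    rw [Finset.sum_congr rfl fun i _ => this i, Finset.sum_comm,
      Finset.sum_mul_sum, Finset.mul_sum]
    refine Finset.sum_congr rfl fun i _ => ?_
    rw [Finset.mul_sum]
  rw [frobNorm, htr, eucNorm, eucNorm, Real.sqrt_mul (by positivity),
    Real.sqrt_mul hx, Real.sqrt_sq (norm_nonneg z)]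
  ring

/-- The Frobenius norm of the product `A_{w₀} A₀^{t₀} A_{w₁} A₀^{t₁} ⋯ A_{w_r} A₀^{t_r}`,
where `A₀ = u vᵀ` is rank one with `vᵀu ≠ 0` and `A_w` is the product of matrices along the
nonempty word `w`, equals
`|vᵀu|^{(∑ tⱼ) - (r+1)} ⬝ (∏_{j=1}^r |vᵀ A_{wⱼ} u|) ⬝ ‖A_{w₀} u‖₂ ⬝ ‖v‖₂`. -/
theorem frobNorm_word_product {d m r : ℕ} (u v : Fin d → ℂ) (huv : v ⬝ᵥ u ≠ 0)
    (A : Fin m → Matrix (Fin d) (Fin d) ℂ)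
    (w : Fin (r + 1) → List (Fin m)) (hw : ∀ j, w j ≠ [])
    (t : Fin (r + 1) → ℕ) (ht : ∀ j, 1 ≤ t j) :
    frobNorm (List.ofFn fun j : Fin (r + 1) =>
        ((w j).map A).prod * (vecMulVec u v) ^ (t j)).prod =
      ‖v ⬝ᵥ u‖ ^ ((∑ j, t j) - (r + 1)) *
        (∏ j : Fin r, ‖v ⬝ᵥ (((w j.succ).map A).prod).mulVec u‖) *
        eucNorm ((((w 0).map A).prod).mulVec u) * eucNorm v := by
  have hexp : (∑ j, t j) - (r + 1) = ∑ j, (t j - 1) := by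
    have h1 : ∑ j, t j = ∑ j, ((t j - 1) + 1) :=
      Finset.sum_congr rfl fun j _ => (Nat.sub_add_cancel (ht j)).symm
    rw [h1, Finset.sum_add_distrib, Finset.sum_const, Finset.card_univ, Fintype.card_fin,
      smul_eq_mul, mul_one, Nat.add_sub_cancel]
  rw [prod_word u v r (fun j => ((w j).map A).prod) t ht, frob_smul_vecMulVec]
  rw [norm_mul, norm_prod, norm_prod]
  simp only [norm_pow]
  rw [hexp, Finset.prod_pow_eq_pow_sum]
end

section
/- Let ω ∈ {0,…,m-1}^ℕ be a sequence in which 0 appears infinitely often, decomposed as ω = w_0 0^{t_0} w_1 0^{t_1} w_2 0^{t_2} ⋯ where the words w_j contain no 0 and t_j ≥ 1. Suppose the frequency ρ_0 of the symbol 0 exists and for every return word w the exact frequency F_w exists. Then ∑_{w ∈ R} |w| · F_w ≤ 1 − ρ_0, where R is the set of return words. -/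
open Filter Topology ENNReal

/-- The word `a` occurs in `ω` at position `j`. -/
def OccursAt {m : ℕ} (a : List (Fin m)) (ω : ℕ → Fin m) (j : ℕ) : Prop :=
  ∀ i : Fin a.length, ω (j + i) = a.get i

/-- The word `a` has asymptotic frequency `ρ` in `ω`. -/
def HasFreq {m : ℕ} (a : List (Fin m)) (ω : ℕ → Fin m) (ρ : ℝ) : Prop :=
  Tendsto (fun n =>
      (((Finset.range n).filter fun j => ∀ i : Fin a.length, ω (j + i) = a.get i).card : ℝ) / n)
    atTop (𝓝 ρ)

/-- `w` is a return word (to `0`) of `ω`: a nonempty word without the symbol `0`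
such that `0w0` occurs in `ω`. -/
def IsReturnWord {m : ℕ} [NeZero m] (ω : ℕ → Fin m) (w : List (Fin m)) : Prop :=
  w ≠ [] ∧ (0 : Fin m) ∉ w ∧ ∃ j, OccursAt (0 :: w ++ [0]) ω j

lemma occ_spec {m : ℕ} [NeZero m] {ω : ℕ → Fin m} {w : List (Fin m)} {j : ℕ}
    (h : OccursAt (0 :: w ++ [0]) ω j) :
    ω j = 0 ∧ (∀ t, (ht : t < w.length) → ω (j + 1 + t) = w[t]) ∧ ω (j + 1 + w.length) = 0 := by
  have hlen : (0 :: w ++ [0]).length = w.length + 2 := by simp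
  refine ⟨?_, ?_, ?_⟩
  · have := h ⟨0, by simp⟩
    simpa using this
  · intro t ht
    have := h ⟨t + 1, by simp; omega⟩
    simp only [List.get_eq_getElem, Fin.val_mk] at this
    rw [List.getElem_append_left (by simp; omega)] at this
    simpa [Nat.add_comm, Nat.add_left_comm] using this
  · have := h ⟨w.length + 1, by simp⟩
    simp only [List.get_eq_getElem, Fin.val_mk] at this
    rw [List.getElem_append_right (by simp)] at this
    simpa [Nat.add_comm, Nat.add_left_comm] using this

lemma count_le {m : ℕ} [NeZero m] (ω : ℕ → Fin m)
    (s : Finset {w : List (Fin m) // IsReturnWord ω w}) (n : ℕ) :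
    ∑ w ∈ s, w.1.length *
        ((Finset.range n).filter fun j => ∀ i : Fin (0 :: w.1 ++ [0]).length,
          ω (j + i) = (0 :: w.1 ++ [0]).get i).card
      ≤ ((Finset.range (n + s.sup fun w => w.1.length)).filter
          fun k => ¬ ∀ i : Fin ([0] : List (Fin m)).length,
            ω (k + i) = ([0] : List (Fin m)).get i).card := by
  classical
  set L := s.sup fun w => w.1.length with hLdef
  have hsum : ∑ w ∈ s, w.1.length *
        ((Finset.range n).filter fun j => ∀ i : Fin (0 :: w.1 ++ [0]).length,
          ω (j + i) = (0 :: w.1 ++ [0]).get i).card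
      = (s.sigma fun w => ((Finset.range n).filter fun j => ∀ i : Fin (0 :: w.1 ++ [0]).length,
          ω (j + i) = (0 :: w.1 ++ [0]).get i) ×ˢ Finset.range w.1.length).card := by
    rw [Finset.card_sigma]
    exact Finset.sum_congr rfl fun w _ => by rw [Finset.card_product, Finset.card_range, mul_comm]
  rw [hsum]
  apply Finset.card_le_card_of_injOn (fun p => p.2.1 + 1 + p.2.2)
  · rintro ⟨⟨w, hw⟩, j, i⟩ hp
    simp only [Finset.mem_coe, Finset.mem_sigma, Finset.mem_product, Finset.mem_filter, Finset.mem_range] at hp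
    obtain ⟨hws, ⟨hjn, hocc⟩, hi⟩ := hp
    have hspec := occ_spec (w := w) (j := j) hocc
    have hLw : w.length ≤ L := Finset.le_sup (f := fun (w : {w : List (Fin m) // IsReturnWord ω w}) => w.1.length) hws
    simp only [Finset.mem_coe, Finset.mem_filter, Finset.mem_range]
    constructor
    · omega
    · intro hall
      have h1 := hall ⟨0, by simp⟩
      simp at h1
      have h2 := hspec.2.1 i hi
      have : w[i] ≠ 0 := fun h => hw.2.1 (h ▸ List.getElem_mem hi)
      exact this (by rw [← h2]; exact h1)
  · rintro ⟨⟨w, hw⟩, j, i⟩ hp ⟨⟨w', hw'⟩, j', i'⟩ hq heq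
    simp only [Finset.mem_coe, Finset.mem_sigma, Finset.mem_product, Finset.mem_filter,
      Finset.mem_range] at hp hq heq
    obtain ⟨hws, ⟨hjn, hocc⟩, hi⟩ := hp
    obtain ⟨hws', ⟨hjn', hocc'⟩, hi'⟩ := hq
    have hs := occ_spec (w := w) (j := j) hocc
    have hs' := occ_spec (w := w') (j := j') hocc'
    have hne : ∀ (u' : List (Fin m)) (k k' a a' : ℕ), (0:Fin m) ∉ u' →
        ω k = 0 → (∀ t, (ht : t < u'.length) → ω (k' + 1 + t) = u'[t]) →
        a' < u'.length → k + 1 + a = k' + 1 + a' → ¬ k' < k := by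
      intro u' k k' a a' hu' hk0 hnz ha' hkk hlt
      have htlt : k - k' - 1 < u'.length := by omega
      have h1 := hnz _ htlt
      rw [show k' + 1 + (k - k' - 1) = k by omega] at h1
      have h2 : u'[k - k' - 1] = 0 := h1.symm.trans hk0
      exact hu' (h2 ▸ List.getElem_mem htlt)
    have hj : j = j' := by
      have hx := hne w j' j i' i hw.2.1 hs'.1 hs.2.1 hi heq.symm
      have hy := hne w' j j' i i' hw'.2.1 hs.1 hs'.2.1 hi' heq
      omega
    subst hj
    have hll : w.length = w'.length := by
      by_contra hne2
      rcases Nat.lt_or_ge w.length w'.length with h | h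
      · have h1 := hs.2.2
        have h2 := hs'.2.1 w.length h
        have h3 : w'[w.length] = 0 := h2.symm.trans h1
        exact hw'.2.1 (h3 ▸ List.getElem_mem h)
      · have h : w'.length < w.length := by omega
        have h1 := hs'.2.2
        have h2 := hs.2.1 w'.length h
        have h3 : w[w'.length] = 0 := h2.symm.trans h1
        exact hw.2.1 (h3 ▸ List.getElem_mem h)
    have hww : w = w' := by
      apply List.ext_getElem hll
      intro t ht ht'
      rw [← hs.2.1 t ht, ← hs'.2.1 t ht']
    subst hww
    have hii : i = i' := by omega
    subst hii
    rfl

lemma key_real {m : ℕ} [NeZero m] (ω : ℕ → Fin m)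
    (ρ0 : ℝ) (h0 : HasFreq [0] ω ρ0)
    (F : List (Fin m) → ℝ)
    (hF : ∀ w, IsReturnWord ω w → HasFreq (0 :: w ++ [0]) ω (F w))
    (s : Finset {w : List (Fin m) // IsReturnWord ω w}) :
    ∑ w ∈ s, (w.1.length : ℝ) * F w.1 ≤ 1 - ρ0 := by
  classical
  set L := s.sup fun w => w.1.length with hLdef
  set Z : ℕ → ℕ := fun N => ((Finset.range N).filter fun j =>
    ∀ i : Fin ([0] : List (Fin m)).length, ω (j + i) = ([0] : List (Fin m)).get i).card with hZdef
  set A : {w : List (Fin m) // IsReturnWord ω w} → ℕ → ℕ := fun w n =>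
    ((Finset.range n).filter fun j => ∀ i : Fin (0 :: w.1 ++ [0]).length,
      ω (j + i) = (0 :: w.1 ++ [0]).get i).card with hAdef
  have hZle : ∀ N, Z N ≤ N := fun N =>
    le_trans (Finset.card_filter_le _ _) (le_of_eq (Finset.card_range N))
  have h0' : Tendsto (fun n => (Z n : ℝ) / n) atTop (𝓝 ρ0) := h0
  have hA' : ∀ w : {w : List (Fin m) // IsReturnWord ω w},
      Tendsto (fun n => (A w n : ℝ) / n) atTop (𝓝 (F w.1)) := fun w => hF w.1 w.2
  -- the natural-number inequality
  have hnat : ∀ n : ℕ, ∑ w ∈ s, w.1.length * A w n ≤ (n + L) - Z (n + L) := by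
    intro n
    have h1 := count_le ω s n
    rw [← hLdef] at h1
    have h3 := Finset.card_filter_add_card_filter_not (s := Finset.range (n + L))
      (p := fun j => ∀ i : Fin ([0] : List (Fin m)).length,
        ω (j + i) = ([0] : List (Fin m)).get i)
    rw [Finset.card_range] at h3
    simp only [hAdef, hZdef]
    omega
  -- the real inequality
  have hineq : ∀ n : ℕ, 1 ≤ n →
      (∑ w ∈ s, (w.1.length : ℝ) * ((A w n : ℝ) / n)) ≤ ((n : ℝ) + L) / n - (Z (n + L) : ℝ) / n := by
    intro n hn
    have hnpos : (0 : ℝ) < n := by exact_mod_cast hn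
    have hcast : ((∑ w ∈ s, w.1.length * A w n : ℕ) : ℝ) ≤ ((n : ℝ) + L) - (Z (n + L) : ℝ) := by
      have h := hnat n
      have hz := hZle (n + L)
      have h2 : ((∑ w ∈ s, w.1.length * A w n : ℕ) : ℝ) ≤ ((n + L - Z (n + L) : ℕ) : ℝ) :=
        Nat.cast_le.mpr h
      rw [Nat.cast_sub hz] at h2
      push_cast at h2 ⊢
      linarith
    have hdiv : ((∑ w ∈ s, w.1.length * A w n : ℕ) : ℝ) / n
        ≤ (((n : ℝ) + L) - (Z (n + L) : ℝ)) / n := by gcongr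
    have hlhs : ∑ w ∈ s, (w.1.length : ℝ) * ((A w n : ℝ) / n)
        = ((∑ w ∈ s, w.1.length * A w n : ℕ) : ℝ) / n := by
      push_cast [Finset.sum_div, mul_div_assoc]
      rfl
    rw [hlhs, ← sub_div]
    exact hdiv
  -- limits
  have hL1 : Tendsto (fun n : ℕ => ((n : ℝ) + L) / n) atTop (𝓝 1) := by
    have h1 : Tendsto (fun n : ℕ => 1 + (L : ℝ) / n) atTop (𝓝 (1 + 0)) :=
      tendsto_const_nhds.add (tendsto_const_div_atTop_nhds_zero_nat (L : ℝ))
    rw [add_zero] at h1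
    apply h1.congr'
    filter_upwards [eventually_ge_atTop 1] with n hn
    have hnne : (n : ℝ) ≠ 0 := Nat.cast_ne_zero.mpr (by omega)
    field_simp
  have hZ2 : Tendsto (fun n : ℕ => (Z (n + L) : ℝ) / ((n : ℝ) + L)) atTop (𝓝 ρ0) := by
    have := h0'.comp (tendsto_add_atTop_nat L)
    apply this.congr
    intro n
    simp [Function.comp]
  have hZ3 : Tendsto (fun n : ℕ => (Z (n + L) : ℝ) / n) atTop (𝓝 ρ0) := by
    have hmul := hZ2.mul hL1
    rw [mul_one] at hmul
    apply hmul.congr'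
    filter_upwards [eventually_ge_atTop 1] with n hn
    have hnne : (n : ℝ) ≠ 0 := Nat.cast_ne_zero.mpr (by omega)
    have hnLne : (n : ℝ) + L ≠ 0 := by positivity
    field_simp
  have hrhs : Tendsto (fun n : ℕ => ((n : ℝ) + L) / n - (Z (n + L) : ℝ) / n) atTop
      (𝓝 (1 - ρ0)) := hL1.sub hZ3
  have hlim : Tendsto (fun n : ℕ => ∑ w ∈ s, (w.1.length : ℝ) * ((A w n : ℝ) / n)) atTop
      (𝓝 (∑ w ∈ s, (w.1.length : ℝ) * F w.1)) :=
    tendsto_finset_sum _ fun w _ => (hA' w).const_mul _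
  exact le_of_tendsto_of_tendsto hlim hrhs
    (by filter_upwards [eventually_ge_atTop 1] with n hn using hineq n hn)

/-- If the symbol `0` occurs infinitely often in `ω`, the frequency `ρ₀` of `0` exists and the
exact frequency `F_w = ρ_{0w0}` of every return word `w` exists, then
`∑_{w ∈ R} |w| F_w ≤ 1 - ρ₀`. -/
theorem sum_length_mul_exact_freq_le {m : ℕ} [NeZero m] (ω : ℕ → Fin m)
    (hinf : {n | ω n = 0}.Infinite)
    (ρ0 : ℝ) (h0 : HasFreq [0] ω ρ0)
    (F : List (Fin m) → ℝ)
    (hF : ∀ w, IsReturnWord ω w → HasFreq (0 :: w ++ [0]) ω (F w)) :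
    ∑' w : {w : List (Fin m) // IsReturnWord ω w},
        (w.1.length : ℝ≥0∞) * ENNReal.ofReal (F w.1) ≤ ENNReal.ofReal (1 - ρ0) := by
  rw [ENNReal.tsum_eq_iSup_sum]
  refine iSup_le fun s => ?_
  have hFnn : ∀ w : {w : List (Fin m) // IsReturnWord ω w}, 0 ≤ F w.1 := fun w =>
    ge_of_tendsto (hF w.1 w.2) (Eventually.of_forall fun n => by positivity)
  have key := key_real ω ρ0 h0 F hF s
  calc ∑ w ∈ s, (w.1.length : ℝ≥0∞) * ENNReal.ofReal (F w.1)
      = ENNReal.ofReal (∑ w ∈ s, (w.1.length : ℝ) * F w.1) := by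
        rw [ENNReal.ofReal_sum_of_nonneg (fun w _ => mul_nonneg (Nat.cast_nonneg _) (hFnn w))]
        exact Finset.sum_congr rfl fun w _ => by
          rw [ENNReal.ofReal_mul (Nat.cast_nonneg _), ENNReal.ofReal_natCast]
    _ ≤ ENNReal.ofReal (1 - ρ0) := ENNReal.ofReal_le_ofReal key
end

section
/- Let A_0 = 𝟙 𝟙' be the d×d all-ones matrix and A_1 a nonnegative invertible d×d matrix. Let ω = 0 1 0 1^2 0 1^3 0 ⋯ be the sequence whose n-th block is 0 followed by 1^n. Then the Lyapunov exponent lim_{n→∞} (1/n) log ‖A_{ω_0} A_{ω_1} ⋯ A_{ω_{n-1}}‖ exists and equals log ρ(A_1), the logarithm of the spectral radius of A_1. -/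
open Filter Topology Matrix

/-- The entry-sum norm `‖A‖ = ∑ᵢⱼ |aᵢⱼ|`. -/
def entrySumNorm {d : ℕ} (A : Matrix (Fin d) (Fin d) ℝ) : ℝ := ∑ i, ∑ j, |A i j|

/-- Spectral radius of a real matrix: the supremum of the moduli of its complex eigenvalues. -/
noncomputable def specRad {d : ℕ} (A : Matrix (Fin d) (Fin d) ℝ) : ℝ :=
  sSup {r : ℝ | ∃ μ : ℂ, μ ∈ spectrum ℂ (A.map Complex.ofReal) ∧ r = ‖μ‖}

/-- The product `A_{ω₀} A_{ω₁} ⋯ A_{ω_{n-1}}` of matrices selected along the sequence `ω`. -/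
def prodAlong {d m : ℕ} (A : Fin m → Matrix (Fin d) (Fin d) ℝ) (ω : ℕ → Fin m) (n : ℕ) :
    Matrix (Fin d) (Fin d) ℝ :=
  (List.ofFn fun i : Fin n => A (ω i)).prod

open Classical in
/-- The sequence `0 1 0 1² 0 1³ 0 ⋯`: its `n`-th entry is `0` iff `n = k(k+3)/2` for some `k`. -/
noncomputable def omegaBlocks (n : ℕ) : Fin 2 :=
  if ∃ k, 2 * n = k * (k + 3) then 0 else 1

/-! ### Auxiliary matrix lemmas -/

section Alg
variable {d : ℕ}

def MNonneg (M : Matrix (Fin d) (Fin d) ℝ) : Prop := ∀ i j, 0 ≤ M i j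

lemma MNonneg.mul {M N : Matrix (Fin d) (Fin d) ℝ} (hM : MNonneg M) (hN : MNonneg N) :
    MNonneg (M * N) := fun i j => by
  rw [Matrix.mul_apply]
  exact Finset.sum_nonneg fun k _ => mul_nonneg (hM i k) (hN k j)

lemma MNonneg.pow {M : Matrix (Fin d) (Fin d) ℝ} (hM : MNonneg M) (k : ℕ) : MNonneg (M ^ k) := by
  induction k with
  | zero => intro i j; rw [pow_zero]; by_cases h : i = j <;> simp [Matrix.one_apply, h]
  | succ k ih => rw [pow_succ]; exact ih.mul hM

lemma entrySumNorm_of_nonneg {M : Matrix (Fin d) (Fin d) ℝ} (hM : MNonneg M) :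
    entrySumNorm M = ∑ i, ∑ j, M i j := by
  unfold entrySumNorm
  exact Finset.sum_congr rfl fun i _ => Finset.sum_congr rfl fun j _ => abs_of_nonneg (hM i j)

lemma entrySumNorm_nonneg (M : Matrix (Fin d) (Fin d) ℝ) : 0 ≤ entrySumNorm M :=
  Finset.sum_nonneg fun _ _ => Finset.sum_nonneg fun _ _ => abs_nonneg _

lemma entrySumNorm_pos {M : Matrix (Fin d) (Fin d) ℝ} (hM : M ≠ 0) : 0 < entrySumNorm M := by
  obtain ⟨i, j, hij⟩ : ∃ i j, M i j ≠ 0 := by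
    by_contra h
    push_neg at h
    exact hM (Matrix.ext fun i j => h i j)
  have h1 : 0 < |M i j| := abs_pos.mpr hij
  have h2 : |M i j| ≤ ∑ j', |M i j'| :=
    Finset.single_le_sum (f := fun j' => |M i j'|) (fun _ _ => abs_nonneg _) (Finset.mem_univ j)
  have h3 : (∑ j', |M i j'|) ≤ entrySumNorm M :=
    Finset.single_le_sum (f := fun i' => ∑ j', |M i' j'|)
      (fun _ _ => Finset.sum_nonneg fun _ _ => abs_nonneg _) (Finset.mem_univ i)
  linarith

/-- all-ones matrix -/
def JJ (d : ℕ) : Matrix (Fin d) (Fin d) ℝ := Matrix.of fun _ _ => (1 : ℝ)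

lemma JJ_nonneg : MNonneg (JJ d) := fun _ _ => zero_le_one

lemma mul_JJ_apply (M : Matrix (Fin d) (Fin d) ℝ) (i j : Fin d) :
    (M * JJ d) i j = ∑ p, M i p := by
  simp [Matrix.mul_apply, JJ]

lemma JJ_mul_apply (M : Matrix (Fin d) (Fin d) ℝ) (i j : Fin d) :
    (JJ d * M) i j = ∑ p, M p j := by
  simp [Matrix.mul_apply, JJ]

lemma JJ_mul_JJ_mul (M : Matrix (Fin d) (Fin d) ℝ) (hM : MNonneg M) :
    JJ d * M * JJ d = entrySumNorm M • JJ d := by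
  ext i j
  rw [mul_JJ_apply, entrySumNorm_of_nonneg hM]
  simp only [Matrix.smul_apply, JJ, Matrix.of_apply, smul_eq_mul, mul_one]
  exact (Finset.sum_congr rfl fun p _ => JJ_mul_apply M i p).trans Finset.sum_comm

lemma entrySumNorm_JJ_mul (M : Matrix (Fin d) (Fin d) ℝ) (hM : MNonneg M) :
    entrySumNorm (JJ d * M) = d * entrySumNorm M := by
  rw [entrySumNorm_of_nonneg (JJ_nonneg.mul hM), entrySumNorm_of_nonneg hM]
  simp only [JJ_mul_apply]
  rw [Finset.sum_const, Finset.card_univ, Fintype.card_fin, nsmul_eq_mul, Finset.sum_comm]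

lemma entrySumNorm_smul (c : ℝ) (hc : 0 ≤ c) (M : Matrix (Fin d) (Fin d) ℝ) :
    entrySumNorm (c • M) = c * entrySumNorm M := by
  unfold entrySumNorm
  rw [Finset.mul_sum]
  refine Finset.sum_congr rfl fun i _ => ?_
  rw [Finset.mul_sum]
  refine Finset.sum_congr rfl fun j _ => ?_
  simp [abs_mul, abs_of_nonneg hc]

end Alg

/-! ### The block structure of `omegaBlocks` -/

/-- block boundary: position just after the `m`-th zero -/
def nb (m : ℕ) : ℕ := m * (m + 3) / 2 + 1

lemma two_nb (m : ℕ) : 2 * nb m = m * (m + 3) + 2 := by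
  have h : 2 ∣ m * (m + 3) := by
    rcases Nat.even_or_odd m with h | h
    · exact Dvd.dvd.mul_right h.two_dvd _
    · obtain ⟨k, hk⟩ := h
      exact Dvd.dvd.mul_left (⟨k + 2, by omega⟩ : 2 ∣ m + 3) m
  obtain ⟨q, hq⟩ := h
  have h2 : m * (m + 3) / 2 = q := by omega
  rw [nb, h2]
  omega

lemma nb_succ (m : ℕ) : nb (m + 1) = nb m + (m + 2) := by
  have h1 := two_nb m; have h2 := two_nb (m + 1); nlinarith [h1, h2]

lemma omega_one {m j : ℕ} (hj : j ≤ m) : omegaBlocks (nb m + j) = 1 := by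
  rw [omegaBlocks, if_neg]
  rintro ⟨k, hk⟩
  have h := two_nb m
  rcases le_or_gt k m with h' | h'
  · nlinarith
  · nlinarith

lemma omega_zero (m : ℕ) : omegaBlocks (nb m + (m + 1)) = 0 := by
  rw [omegaBlocks, if_pos]
  exact ⟨m + 1, by nlinarith [two_nb m]⟩

lemma omega_start : omegaBlocks 0 = 0 := by
  rw [omegaBlocks, if_pos ⟨0, by ring⟩]

lemma prodAlong_succ {d m : ℕ} (A : Fin m → Matrix (Fin d) (Fin d) ℝ) (ω : ℕ → Fin m) (n : ℕ) :
    prodAlong A ω (n + 1) = prodAlong A ω n * A (ω n) := by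
  rw [prodAlong, List.ofFn_succ', List.concat_eq_append, List.prod_append]
  simp [prodAlong]

lemma nb_decomp : ∀ n : ℕ, 1 ≤ n → ∃ m j, j ≤ m + 1 ∧ n = nb m + j := by
  intro n
  induction n with
  | zero => omega
  | succ n ih =>
    intro _
    rcases Nat.eq_zero_or_pos n with h | h
    · exact ⟨0, 0, by omega, by subst h; rfl⟩
    · obtain ⟨m, j, hj, hn⟩ := ih h
      rcases Nat.lt_or_ge j (m + 1) with h' | h'
      · exact ⟨m, j + 1, by omega, by omega⟩
      · refine ⟨m + 1, 0, by omega, ?_⟩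
        rw [nb_succ]
        omega

/-! ### Exact product formula -/

section Prod
variable {d : ℕ} (A : Fin 2 → Matrix (Fin d) (Fin d) ℝ)

/-- running coefficient -/
noncomputable def cc (m : ℕ) : ℝ := ∏ k ∈ Finset.range m, entrySumNorm ((A 1) ^ (k + 1))

variable (hA0 : A 0 = JJ d) (hA1nn : MNonneg (A 1))

include hA0 hA1nn in
lemma prod_formula : ∀ m : ℕ, ∀ j ≤ m + 1,
    prodAlong A omegaBlocks (nb m + j) = cc A m • (JJ d * (A 1) ^ j) := by
  intro m
  induction m with
  | zero =>
    have base : prodAlong A omegaBlocks (nb 0) = cc A 0 • (JJ d * (A 1) ^ 0) := by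
      show prodAlong A omegaBlocks (0 + 1) = _
      rw [prodAlong_succ, omega_start, hA0]
      simp [prodAlong, cc]
    intro j hj
    interval_cases j
    · exact base
    · have h1 : omegaBlocks (nb 0) = 1 := by simpa using omega_one (le_refl 0)
      show prodAlong A omegaBlocks (nb 0 + 1) = _
      rw [prodAlong_succ, h1, base]
      rw [smul_mul_assoc, mul_assoc]
      norm_num
  | succ m ih =>
    have base : prodAlong A omegaBlocks (nb (m + 1)) = cc A (m + 1) • (JJ d * (A 1) ^ 0) := by
      rw [nb_succ]
      show prodAlong A omegaBlocks (nb m + (m + 1) + 1) = _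
      rw [prodAlong_succ, omega_zero m, ih (m + 1) le_rfl, hA0]
      rw [smul_mul_assoc, JJ_mul_JJ_mul _ (hA1nn.pow (m + 1))]
      have hcc : cc A (m + 1) = cc A m * entrySumNorm ((A 1) ^ (m + 1)) :=
        Finset.prod_range_succ _ _
      rw [smul_smul, pow_zero, mul_one, hcc]
    intro j hj
    induction j with
    | zero => exact base
    | succ j ihj =>
      show prodAlong A omegaBlocks (nb (m + 1) + j + 1) = _
      rw [prodAlong_succ, omega_one (by omega : j ≤ m + 1), ihj (by omega)]
      rw [smul_mul_assoc, mul_assoc, ← pow_succ]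

end Prod

/-! ### Spectral part: Gelfand's formula -/

section Spec
attribute [local instance] Matrix.linftyOpNormedRing Matrix.linftyOpNormedAlgebra
open scoped NNReal ENNReal

variable {d : ℕ} [NeZero d]

noncomputable instance : CompleteSpace (Matrix (Fin d) (Fin d) ℂ) :=
  (by infer_instance : CompleteSpace (Fin d → Fin d → ℂ))

omit [NeZero d] in
lemma row_le_opNorm (M : Matrix (Fin d) (Fin d) ℝ) (i : Fin d) :
    ∑ j, |M i j| ≤ ‖M.map Complex.ofReal‖ := by
  rw [Matrix.linfty_opNorm_def]
  have h1 : (∑ j, ‖(M.map Complex.ofReal) i j‖₊) ≤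
      (Finset.univ : Finset (Fin d)).sup fun i => ∑ j, ‖(M.map Complex.ofReal) i j‖₊ :=
    Finset.le_sup (f := fun i => ∑ j, ‖(M.map Complex.ofReal) i j‖₊) (Finset.mem_univ i)
  have h2 := NNReal.coe_le_coe.mpr h1
  refine le_trans (le_of_eq ?_) h2
  push_cast
  refine Finset.sum_congr rfl fun j _ => ?_
  simp [Matrix.map_apply, Complex.norm_real, Real.norm_eq_abs]

omit [NeZero d] in
lemma opNorm_le_entrySumNorm (M : Matrix (Fin d) (Fin d) ℝ) :
    ‖M.map Complex.ofReal‖ ≤ entrySumNorm M := by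
  rw [Matrix.linfty_opNorm_def]
  have h1 : ((Finset.univ : Finset (Fin d)).sup fun i => ∑ j, ‖(M.map Complex.ofReal) i j‖₊) ≤
      (entrySumNorm M).toNNReal := by
    refine Finset.sup_le fun i _ => ?_
    rw [← NNReal.coe_le_coe]
    rw [Real.coe_toNNReal _ (entrySumNorm_nonneg M)]
    have : ((∑ j, ‖(M.map Complex.ofReal) i j‖₊ : ℝ≥0) : ℝ) = ∑ j, |M i j| := by
      push_cast
      refine Finset.sum_congr rfl fun j _ => ?_
      simp [Matrix.map_apply, Complex.norm_real, Real.norm_eq_abs]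
    rw [this]
    exact Finset.single_le_sum (f := fun i => ∑ j, |M i j|)
      (fun i _ => Finset.sum_nonneg fun j _ => abs_nonneg _) (Finset.mem_univ i)
  calc ((Finset.univ.sup fun i => ∑ j, ‖(M.map Complex.ofReal) i j‖₊ : ℝ≥0) : ℝ)
      ≤ ((entrySumNorm M).toNNReal : ℝ) := NNReal.coe_le_coe.mpr h1
    _ = entrySumNorm M := Real.coe_toNNReal _ (entrySumNorm_nonneg M)

omit [NeZero d] in
lemma entrySumNorm_le_opNorm (M : Matrix (Fin d) (Fin d) ℝ) :
    entrySumNorm M ≤ d * ‖M.map Complex.ofReal‖ := by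
  unfold entrySumNorm
  calc ∑ i, ∑ j, |M i j| ≤ ∑ _i : Fin d, ‖M.map Complex.ofReal‖ :=
        Finset.sum_le_sum fun i _ => row_le_opNorm M i
    _ = d * ‖M.map Complex.ofReal‖ := by
        rw [Finset.sum_const, Finset.card_univ, Fintype.card_fin, nsmul_eq_mul]

lemma specRad_spectral (B : Matrix (Fin d) (Fin d) ℝ) (hB : IsUnit B) :
    0 < specRad B ∧
      spectralRadius ℂ (B.map Complex.ofReal) = ENNReal.ofReal (specRad B) := by
  set a := B.map Complex.ofReal with ha_def
  have ha : IsUnit a := by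
    have h := hB.map (Complex.ofRealHom.mapMatrix (m := Fin d))
    rwa [RingHom.mapMatrix_apply] at h
  have hne : (spectrum ℂ a).Nonempty := spectrum.nonempty a
  have hcpt : IsCompact (spectrum ℂ a) := spectrum.isCompact a
  set S : Set ℝ := norm '' spectrum ℂ a with hS_def
  have hSne : S.Nonempty := hne.image _
  have hScpt : IsCompact S := hcpt.image continuous_norm
  have hSbdd : BddAbove S := hScpt.bddAbove
  have hspec : specRad B = sSup S := by
    rw [specRad]
    congr 1
    ext r
    constructor
    · rintro ⟨μ, hμ, rfl⟩; exact ⟨μ, hμ, rfl⟩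
    · rintro ⟨μ, hμ, rfl⟩; exact ⟨μ, hμ, rfl⟩
  obtain ⟨μ0, hμ0mem, hμ0⟩ := hScpt.sSup_mem hSne
  have hμ0ne : μ0 ≠ 0 := by
    intro h
    rw [h] at hμ0mem
    exact (spectrum.zero_notMem_iff ℂ).mpr ha hμ0mem
  have hpos : 0 < specRad B := by
    rw [hspec, ← hμ0]
    exact norm_pos_iff.mpr hμ0ne
  refine ⟨hpos, ?_⟩
  rw [hspec]
  apply le_antisymm
  · rw [spectralRadius]
    refine iSup₂_le fun μ hμ => ?_
    rw [← ENNReal.ofReal_coe_nnreal, coe_nnnorm]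
    exact ENNReal.ofReal_le_ofReal
      (by exact le_csSup hSbdd ⟨μ, hμ, rfl⟩)
  · have h1 : ENNReal.ofReal (sSup S) = (‖μ0‖₊ : ℝ≥0∞) := by
      rw [← ENNReal.ofReal_coe_nnreal, coe_nnnorm, hμ0]
    rw [h1, spectralRadius]
    exact le_iSup₂ (f := fun μ (_ : μ ∈ spectrum ℂ a) => (‖μ‖₊ : ℝ≥0∞)) μ0 hμ0mem

lemma gelfand (B : Matrix (Fin d) (Fin d) ℝ) (hB : IsUnit B) :
    0 < specRad B ∧ Tendsto (fun k : ℕ => Real.log (entrySumNorm (B ^ k)) / k) atTop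
      (𝓝 (Real.log (specRad B))) := by
  obtain ⟨hpos, hR⟩ := specRad_spectral B hB
  refine ⟨hpos, ?_⟩
  set a := B.map Complex.ofReal with ha_def
  have ha : IsUnit a := by
    have h := hB.map (Complex.ofRealHom.mapMatrix (m := Fin d))
    rwa [RingHom.mapMatrix_apply] at h
  have hapow : ∀ k : ℕ, a ^ k = (B ^ k).map Complex.ofReal := by
    intro k
    have e : a = Complex.ofRealHom.mapMatrix B := rfl
    rw [e, ← map_pow]
    rfl
  have hfin : spectralRadius ℂ a ≠ ⊤ := by rw [hR]; exact ENNReal.ofReal_ne_top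
  have htoReal : (spectralRadius ℂ a).toReal = specRad B := by
    rw [hR, ENNReal.toReal_ofReal hpos.le]
  have hG := spectrum.pow_nnnorm_pow_one_div_tendsto_nhds_spectralRadius a
  have h2 : Tendsto (fun n : ℕ => ‖a ^ n‖ ^ (1 / (n : ℝ))) atTop (𝓝 (specRad B)) := by
    rw [← htoReal]
    have := (ENNReal.tendsto_toReal hfin).comp hG
    refine this.congr fun n => ?_
    simp only [Function.comp_apply]
    rw [← ENNReal.toReal_rpow, ENNReal.coe_toReal, coe_nnnorm]
  have hanpos : ∀ n : ℕ, 0 < ‖a ^ n‖ := by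
    intro n
    rw [norm_pos_iff]
    exact (ha.pow n).ne_zero
  have h3 : Tendsto (fun n : ℕ => Real.log ‖a ^ n‖ / n) atTop (𝓝 (Real.log (specRad B))) := by
    have hc := (Real.continuousAt_log hpos.ne').tendsto.comp h2
    refine hc.congr' ?_
    filter_upwards [eventually_ge_atTop 1] with n hn
    simp only [Function.comp_apply]
    rw [Real.log_rpow (hanpos n), one_div, inv_mul_eq_div]
  have hnn : ∀ n : ℕ, Real.log ‖a ^ n‖ ≤ Real.log (entrySumNorm (B ^ n)) ∧
      Real.log (entrySumNorm (B ^ n)) ≤ Real.log ‖a ^ n‖ + Real.log d := by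
    intro n
    have h1 : ‖a ^ n‖ ≤ entrySumNorm (B ^ n) := by
      rw [hapow]; exact opNorm_le_entrySumNorm _
    have h2' : entrySumNorm (B ^ n) ≤ d * ‖a ^ n‖ := by
      rw [hapow]; exact entrySumNorm_le_opNorm _
    have hd : (0:ℝ) < d := by
      have := NeZero.pos d
      exact_mod_cast this
    constructor
    · exact Real.log_le_log (hanpos n) h1
    · calc Real.log (entrySumNorm (B ^ n)) ≤ Real.log (d * ‖a ^ n‖) :=
            Real.log_le_log (lt_of_lt_of_le (hanpos n) h1) h2'
        _ = Real.log d + Real.log ‖a ^ n‖ := Real.log_mul hd.ne' (hanpos n).ne'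
        _ = Real.log ‖a ^ n‖ + Real.log d := by ring
  have hlogd : Tendsto (fun n : ℕ => Real.log ‖a ^ n‖ / n + Real.log d / n) atTop
      (𝓝 (Real.log (specRad B))) := by
    have : Tendsto (fun n : ℕ => Real.log d / n) atTop (𝓝 0) :=
      tendsto_const_nhds.div_atTop tendsto_natCast_atTop_atTop
    simpa using h3.add this
  refine tendsto_of_tendsto_of_tendsto_of_le_of_le' h3 hlogd ?_ ?_
  · filter_upwards [eventually_ge_atTop 1] with n hn
    have hn' : (0:ℝ) < n := by exact_mod_cast hn
    exact div_le_div_of_nonneg_right ((hnn n).1) hn'.le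
  · filter_upwards [eventually_ge_atTop 1] with n hn
    have hn' : (0:ℝ) < n := by exact_mod_cast hn
    rw [← add_div]
    exact div_le_div_of_nonneg_right ((hnn n).2) hn'.le

end Spec

/-! ### Arithmetic helper lemmas -/

lemma am_gm_aux {e E x y : ℝ} (he : 0 < e) (hxy : x ^ 2 ≤ 2 * y) :
    x * E ≤ e * y + E ^ 2 / (2 * e) := by
  rw [← sub_nonneg]
  have hid : e * y + E ^ 2 / (2 * e) - x * E =
      (e ^ 2 * (2 * y - x ^ 2) + (e * x - E) ^ 2) / (2 * e) := by
    field_simp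
    ring
  rw [hid]
  apply div_nonneg
  · have h1 : 0 ≤ e ^ 2 * (2 * y - x ^ 2) := mul_nonneg (sq_nonneg e) (by linarith)
    have h2 : 0 ≤ (e * x - E) ^ 2 := sq_nonneg _
    linarith
  · positivity

lemma final_bound (ε' C0 L ld Sb bj m j n E C1 F : ℝ)
    (hε' : 0 < ε') (hC0 : 0 ≤ C0) (hm : 0 ≤ m) (hj0 : 0 ≤ j) (hj : j ≤ m + 1)
    (hSb : |Sb| ≤ m * C0 + ε' * (m * (m + 1) / 2))
    (hbj : |bj| ≤ C0 + ε' * j)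
    (hFeq : F = Sb + bj + ld - (m + 1) * L)
    (hmn1 : m * (m + 1) / 2 ≤ n)
    (hmn2 : (m + 1) ^ 2 ≤ 2 * n)
    (hE : E = C0 + ε' + |L| + 1)
    (hC1 : C1 = E ^ 2 / (2 * ε') + |ld|) :
    |F| ≤ 2 * ε' * n + C1 := by
  have habs : |F| ≤ |Sb| + |bj| + |ld| + (m + 1) * |L| := by
    rw [hFeq]
    have h1 := abs_add_le (Sb + bj + ld) (-((m + 1) * L))
    rw [abs_neg] at h1
    have h2 := abs_add_le (Sb + bj) ld
    have h3 := abs_add_le Sb bj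
    have h4 : |(m + 1) * L| = (m + 1) * |L| := by
      rw [abs_mul, abs_of_nonneg (by linarith : (0:ℝ) ≤ m + 1)]
    have h5 : Sb + bj + ld - (m + 1) * L = Sb + bj + ld + -((m + 1) * L) := by ring
    rw [h5]
    linarith
  have hm1E : (m + 1) * E ≤ ε' * n + E ^ 2 / (2 * ε') := am_gm_aux hε' hmn2
  have hsn : ε' * (m * (m + 1) / 2) ≤ ε' * n := mul_le_mul_of_nonneg_left hmn1 hε'.le
  have hexp : (m + 1) * E = m * C0 + m * ε' + m * |L| + m + C0 + ε' + |L| + 1 := by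
    rw [hE]; ring
  have hjε : ε' * j ≤ ε' * (m + 1) := mul_le_mul_of_nonneg_left hj hε'.le
  rw [hC1]
  linarith [abs_nonneg L]

/-! ### Gauss sum -/

lemma gauss_sum (m : ℕ) : (∑ k ∈ Finset.range m, ((k : ℝ) + 1)) = m * (m + 1) / 2 := by
  induction m with
  | zero => simp
  | succ m ih =>
    rw [Finset.sum_range_succ, ih]
    push_cast
    ring

/-- For `A₀` the all-ones matrix and `A₁` nonnegative and invertible, the Lyapunov exponent of
the matrix product along `0 1 0 1² 0 1³ ⋯` exists and equals `log ρ(A₁)`. -/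
theorem lyapunov_blocks_eq_log_specRad {d : ℕ} (A : Fin 2 → Matrix (Fin d) (Fin d) ℝ)
    (hA0 : A 0 = Matrix.of fun _ _ => (1 : ℝ))
    (hA1nn : ∀ i j, 0 ≤ A 1 i j) (hA1 : IsUnit (A 1)) :
    Tendsto (fun n => Real.log (entrySumNorm (prodAlong A omegaBlocks n)) / n)
      atTop (𝓝 (Real.log (specRad (A 1)))) := by
  rcases Nat.eq_zero_or_pos d with hd | hd
  · -- trivial case `d = 0`
    subst hd
    haveI : Subsingleton (Matrix (Fin 0) (Fin 0) ℂ) :=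
      ⟨fun M N => Matrix.ext fun i _ => i.elim0⟩
    have hspec : spectrum ℂ ((A 1).map Complex.ofReal) = ∅ := by
      ext μ
      simp only [Set.mem_empty_iff_false, iff_false]
      intro hμ
      exact spectrum.notMem_iff.mpr (isUnit_of_subsingleton _) hμ
    have hsr : specRad (A 1) = 0 := by
      rw [specRad, hspec]
      convert Real.sSup_empty using 2
      ext r
      simp
    have hz : ∀ n, entrySumNorm (prodAlong A omegaBlocks n) = 0 := by
      intro n
      simp [entrySumNorm]
    simp only [hz, hsr, Real.log_zero, zero_div]
    exact tendsto_const_nhds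
  · haveI : NeZero d := ⟨hd.ne'⟩
    have hA1nn' : MNonneg (A 1) := hA1nn
    obtain ⟨hρpos, hGel⟩ := gelfand (A 1) hA1
    set L := Real.log (specRad (A 1)) with hL_def
    set aa : ℕ → ℝ := fun k => Real.log (entrySumNorm ((A 1) ^ k)) with haa_def
    have hA0' : A 0 = JJ d := hA0
    have hBpow_ne : ∀ j : ℕ, (A 1) ^ j ≠ 0 := by
      intro j
      haveI : Nontrivial (Matrix (Fin d) (Fin d) ℝ) := inferInstance
      exact (hA1.pow j).ne_zero
    have hspos : ∀ j : ℕ, 0 < entrySumNorm ((A 1) ^ j) := fun j => entrySumNorm_pos (hBpow_ne j)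
    have hccpos : ∀ m : ℕ, 0 < cc A m := fun m =>
      Finset.prod_pos fun k _ => hspos (k + 1)
    have hdpos : (0:ℝ) < d := by exact_mod_cast hd
    -- exact formula for the log of the norm of the partial products
    have hF : ∀ m j, j ≤ m + 1 →
        Real.log (entrySumNorm (prodAlong A omegaBlocks (nb m + j))) =
          (∑ k ∈ Finset.range m, aa (k + 1)) + Real.log d + aa j := by
      intro m j hj
      rw [prod_formula A hA0' hA1nn' m j hj]
      rw [entrySumNorm_smul _ (hccpos m).le, entrySumNorm_JJ_mul _ (hA1nn'.pow j)]
      rw [Real.log_mul (hccpos m).ne' (mul_pos hdpos (hspos j)).ne', Real.log_mul hdpos.ne' (hspos j).ne']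
      have hlogcc : Real.log (cc A m) = ∑ k ∈ Finset.range m, aa (k + 1) := by
        rw [cc, Real.log_prod fun k _ => (hspos (k + 1)).ne']
      rw [hlogcc]
      ring
    -- the ε-argument
    rw [Metric.tendsto_atTop]
    intro ε hε
    set ε' := ε / 8 with hε'_def
    have hε' : 0 < ε' := by positivity
    obtain ⟨K, hK⟩ := Metric.tendsto_atTop.mp hGel ε' hε'
    set C0 : ℝ := ∑ i ∈ Finset.range (K + 1), |aa i - i * L| with hC0_def
    have hC0nn : 0 ≤ C0 := Finset.sum_nonneg fun _ _ => abs_nonneg _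
    have hlin : ∀ k : ℕ, |aa k - k * L| ≤ C0 + ε' * k := by
      intro k
      have hk0 : (0:ℝ) ≤ k := Nat.cast_nonneg k
      rcases Nat.lt_or_ge k (K + 1) with h | h
      · have : |aa k - k * L| ≤ C0 :=
          Finset.single_le_sum (f := fun i => |aa i - i * L|) (fun _ _ => abs_nonneg _)
            (Finset.mem_range.mpr h)
        nlinarith
      · have hk1 : 1 ≤ k := by omega
        have hkpos : (0:ℝ) < k := by exact_mod_cast hk1
        have hd1 := hK k (by omega)
        rw [Real.dist_eq] at hd1
        have h1 : aa k - k * L = k * (aa k / k - L) := by field_simp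
        rw [h1, abs_mul, abs_of_pos hkpos]
        have h2 : (k:ℝ) * |aa k / k - L| ≤ (k:ℝ) * ε' :=
          mul_le_mul_of_nonneg_left hd1.le hkpos.le
        linarith only [h2, hC0nn]
    set E : ℝ := C0 + ε' + |L| + 1 with hE_def
    have hE : 0 < E := by positivity
    set C1 : ℝ := E ^ 2 / (2 * ε') + |Real.log d| with hC1_def
    have hC1nn : 0 ≤ C1 := by positivity
    clear_value L aa ε' C0 E C1
    obtain ⟨N0, hN0⟩ := exists_nat_gt (2 * C1 / ε)
    refine ⟨N0 + 1, fun n hn => ?_⟩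
    have hn1 : 1 ≤ n := by omega
    obtain ⟨m, j, hj, hnmj⟩ := nb_decomp n hn1
    -- real versions of all the arithmetic facts
    have hnbR : 2 * ((nb m : ℝ)) = m * (m + 3) + 2 := by exact_mod_cast two_nb m
    have hnR : (n : ℝ) = (nb m : ℝ) + j := by exact_mod_cast hnmj
    have hjR : (j : ℝ) ≤ (m : ℝ) + 1 := by exact_mod_cast hj
    have hmR : (0:ℝ) ≤ m := Nat.cast_nonneg m
    have hjR0 : (0:ℝ) ≤ j := Nat.cast_nonneg j
    have hnpos : (0:ℝ) < n := by
      have : (1:ℝ) ≤ n := by exact_mod_cast hn1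
      linarith
    have hngt : (n:ℝ) > 2 * C1 / ε := by
      have : (N0:ℝ) ≤ (n:ℝ) - 1 := by
        have : (N0 + 1 : ℝ) ≤ n := by exact_mod_cast hn
        linarith
      linarith
    -- the sum bound
    have hs1 : |∑ k ∈ Finset.range m, (aa (k + 1) - ((k:ℝ) + 1) * L)| ≤
        ∑ k ∈ Finset.range m, (C0 + ε' * ((k:ℝ) + 1)) := by
      refine (Finset.abs_sum_le_sum_abs _ _).trans (Finset.sum_le_sum fun k _ => ?_)
      have := hlin (k + 1)
      push_cast at this
      linarith
    have hs2 : ∑ k ∈ Finset.range m, (C0 + ε' * ((k:ℝ) + 1)) =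
        m * C0 + ε' * (m * (m + 1) / 2) := by
      rw [Finset.sum_add_distrib, Finset.sum_const, Finset.card_range, ← Finset.mul_sum,
        gauss_sum, nsmul_eq_mul]
    -- rewrite the target quantity
    have hFn : Real.log (entrySumNorm (prodAlong A omegaBlocks n)) =
        (∑ k ∈ Finset.range m, aa (k + 1)) + Real.log d + aa j := by
      rw [hnmj]; exact hF m j hj
    have hsplit : (∑ k ∈ Finset.range m, aa (k + 1)) =
        (∑ k ∈ Finset.range m, (aa (k + 1) - ((k:ℝ) + 1) * L)) + (m * (m + 1) / 2) * L := by
      rw [Finset.sum_sub_distrib, ← Finset.sum_mul, gauss_sum]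
      ring
    set Sb := ∑ k ∈ Finset.range m, (aa (k + 1) - ((k:ℝ) + 1) * L) with hSb_def
    have hbj := hlin j
    have hFsub : Real.log (entrySumNorm (prodAlong A omegaBlocks n)) - n * L =
        Sb + (aa j - j * L) + Real.log d - ((m:ℝ) + 1) * L := by
      rw [hFn, hsplit, hnR]
      have : (nb m : ℝ) = m * (m + 3) / 2 + 1 := by linarith
      rw [this]
      ring
    -- inequalities
    have hmn1 : (m:ℝ) * (m + 1) / 2 ≤ n := by
      have hexp : (m:ℝ) * (m + 3) = m * (m + 1) + 2 * m := by ring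
      linarith only [hnR, hnbR, hjR0, hmR, hexp]
    have hmn2 : ((m:ℝ) + 1) ^ 2 ≤ 2 * n := by
      have hexp : ((m:ℝ) + 1) ^ 2 = m * (m + 3) - m + 1 := by ring
      linarith only [hnR, hnbR, hjR0, hmR, hexp]
    have habs : |Real.log (entrySumNorm (prodAlong A omegaBlocks n)) - n * L| ≤
        2 * ε' * n + C1 := by
      have h1 : |Sb| ≤ m * C0 + ε' * ((m:ℝ) * (m + 1) / 2) := hs2 ▸ hs1
      exact final_bound ε' C0 L (Real.log d) Sb (aa j - j * L) m j n E C1 _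
        hε' hC0nn hmR hjR0 hjR h1 hbj hFsub hmn1 hmn2 hE_def hC1_def
    -- conclude
    rw [Real.dist_eq]
    have heq : Real.log (entrySumNorm (prodAlong A omegaBlocks n)) / n - L =
        (Real.log (entrySumNorm (prodAlong A omegaBlocks n)) - n * L) / n := by
      field_simp
    rw [heq, abs_div, abs_of_pos hnpos, div_lt_iff₀ hnpos]
    have hC1n : C1 < ε / 2 * n := by
      have h := (div_lt_iff₀ hε).mp hngt
      linarith only [h]
    calc |Real.log (entrySumNorm (prodAlong A omegaBlocks n)) - n * L|
        ≤ 2 * ε' * n + C1 := habs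
      _ < 2 * ε' * n + ε / 2 * n := by linarith
      _ ≤ ε * n := by
          rw [hε'_def]
          linarith only [mul_nonneg hε.le hnpos.le]
end

section
/- Let ω ∈ {0,1,…,m-1}^ℕ be generic for a shift-invariant ergodic measure ν with ν([0]) > 0, and decompose ω = w_0 0^{t_0} w_1 0^{t_1} ⋯ into return words w_j (not containing 0) and runs of zeros. Then lim_{M→∞} limsup_{n→∞} (1/n) ∑_{j : w_j ⊂ ω|_0^{n-1}, |w_j| > M} |w_j| = 0; i.e., long return words occupy asymptotically negligible density. -/
open Filter Topology MeasureTheory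

open Classical in
/-- The number of positions `k < n` lying in a maximal `0`-free block of `ω` of length `> M`
which is a complete return word contained in the prefix of length `n` (it is preceded by a `0`
and followed by a `0`). This counts `∑ |w_j|` over return words `w_j ≺ ω|₀^{n-1}` with
`|w_j| > M` in the return-word decomposition of `ω`. -/
noncomputable def longReturnWordCount {m : ℕ} [NeZero m] (ω : ℕ → Fin m) (M n : ℕ) : ℕ :=
  ((Finset.range n).filter fun k => ∃ a b : ℕ, a ≤ k ∧ k < b ∧ b ≤ n ∧ 1 ≤ a ∧
      ω (a - 1) = 0 ∧ ω b = 0 ∧ (∀ i, a ≤ i → i < b → ω i ≠ 0) ∧ M < b - a).card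

open Classical in
/-- Every position in a complete maximal zero-free block of length `> M` in the prefix of
length `n` lies in a zero-free window of length `M / 2 + 1` starting at some `k < n`, either
forwards or backwards.  Hence `longReturnWordCount` is at most twice the number of starting
positions of zero-free windows of length `M / 2 + 1`. -/
lemma longReturnWordCount_le_twice {m : ℕ} [NeZero m] (ω : ℕ → Fin m) (M n : ℕ) :
    longReturnWordCount ω M n ≤
      2 * ((Finset.range n).filter fun k => ∀ i < M / 2 + 1, ω (i + k) ≠ 0).card := by
  set h := M / 2 + 1 with hh
  set F := (Finset.range n).filter fun k => ∀ i < h, ω (i + k) ≠ 0 with hF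
  unfold longReturnWordCount
  have hsub : ((Finset.range n).filter fun k => ∃ a b : ℕ, a ≤ k ∧ k < b ∧ b ≤ n ∧ 1 ≤ a ∧
      ω (a - 1) = 0 ∧ ω b = 0 ∧ (∀ i, a ≤ i → i < b → ω i ≠ 0) ∧ M < b - a)
      ⊆ F ∪ F.image (· + (h - 1)) := by
    intro p hp
    simp only [Finset.mem_filter, Finset.mem_range] at hp
    obtain ⟨hpn, a, b, hap, hpb, hbn, ha1, hωa, hωb, hzf, hM⟩ := hp
    by_cases hcase : h ≤ b - p
    · apply Finset.mem_union_left
      simp only [hF, Finset.mem_filter, Finset.mem_range]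
      exact ⟨hpn, fun i hi => hzf _ (by omega) (by omega)⟩
    · apply Finset.mem_union_right
      refine Finset.mem_image.2 ⟨p - (h - 1), ?_, by omega⟩
      simp only [hF, Finset.mem_filter, Finset.mem_range]
      exact ⟨by omega, fun i hi => hzf _ (by omega) (by omega)⟩
  calc ((Finset.range n).filter fun k => ∃ a b : ℕ, a ≤ k ∧ k < b ∧ b ≤ n ∧ 1 ≤ a ∧
      ω (a - 1) = 0 ∧ ω b = 0 ∧ (∀ i, a ≤ i → i < b → ω i ≠ 0) ∧ M < b - a).card
      ≤ (F ∪ F.image (· + (h - 1))).card := Finset.card_le_card hsub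
    _ ≤ F.card + (F.image (· + (h - 1))).card := Finset.card_union_le _ _
    _ ≤ F.card + F.card := by
        have := Finset.card_image_le (s := F) (f := (· + (h - 1)))
        omega
    _ = 2 * F.card := by ring

open Classical in
/-- Genericity applied to the (continuous) indicator of the clopen cylinder set
`{y | ∀ i < h, y i ≠ 0}`: the frequency of zero-free windows of length `h` in `ω`
converges to the measure of the cylinder. -/
lemma freq_tendsto {m : ℕ} [NeZero m] (ω : ℕ → Fin m) (ν : Measure (ℕ → Fin m))
    [IsProbabilityMeasure ν]
    (hgen : ∀ f : C(ℕ → Fin m, ℝ),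
      Tendsto (fun n => (∑ k ∈ Finset.range n, f (fun i => ω (i + k))) / n)
        atTop (𝓝 (∫ y, f y ∂ν))) (h : ℕ) :
    Tendsto (fun n => (((Finset.range n).filter fun k => ∀ i < h, ω (i + k) ≠ 0).card : ℝ) / n)
      atTop (𝓝 ((ν {y | ∀ i < h, y i ≠ 0}).toReal)) := by
  have hc : Continuous fun y : ℕ → Fin m => (if ∀ i < h, y i ≠ 0 then (1:ℝ) else 0) := by
    have : (fun y : ℕ → Fin m => (if ∀ i < h, y i ≠ 0 then (1:ℝ) else 0))
        = (fun v : Fin h → Fin m => (if ∀ i : Fin h, v i ≠ 0 then (1:ℝ) else 0))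
          ∘ (fun y (i : Fin h) => y (i : ℕ)) := by
      funext y
      simp only [Function.comp_apply]
      congr 1
      simp only [eq_iff_iff]
      constructor
      · intro H i; exact H i i.2
      · intro H i hi; exact H ⟨i, hi⟩
    rw [this]
    exact continuous_of_discreteTopology.comp (continuous_pi fun i => continuous_apply _)
  have hmeas : MeasurableSet {y : ℕ → Fin m | ∀ i < h, y i ≠ 0} := by
    have : {y : ℕ → Fin m | ∀ i < h, y i ≠ 0}
        = ⋂ i ∈ Set.Iio h, (fun y : ℕ → Fin m => y i) ⁻¹' {0}ᶜ := by
      ext y; simp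
    rw [this]
    exact MeasurableSet.biInter (Set.to_countable _) fun i _ =>
      (measurable_pi_apply i) (measurableSet_singleton (0 : Fin m)).compl
  have hgen' := hgen ⟨_, hc⟩
  simp only [ContinuousMap.coe_mk] at hgen'
  have hsum : ∀ n : ℕ, (∑ k ∈ Finset.range n, if ∀ i < h, ω (i + k) ≠ 0 then (1:ℝ) else 0)
      = (((Finset.range n).filter fun k => ∀ i < h, ω (i + k) ≠ 0).card : ℝ) := fun n =>
    Finset.sum_boole _ _
  have hint : (∫ y, (if ∀ i < h, y i ≠ 0 then (1:ℝ) else 0) ∂ν)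
      = (ν {y | ∀ i < h, y i ≠ 0}).toReal := by
    have : (fun y : ℕ → Fin m => if ∀ i < h, y i ≠ 0 then (1:ℝ) else 0)
        = Set.indicator {y | ∀ i < h, y i ≠ 0} (fun _ => (1:ℝ)) := by
      funext y; simp [Set.indicator_apply, Set.mem_setOf_eq]
    rw [this, integral_indicator_const (1:ℝ) hmeas, smul_eq_mul, mul_one]
    rfl
  rw [← hint]
  convert hgen' using 2 with n
  rw [hsum n]

/-- If `ω` is generic for a shift-invariant ergodic measure `ν` with `ν([0]) > 0`, then the long
return words in its decomposition occupy asymptotically negligible density: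
`lim_{M→∞} limsup_n (1/n) ∑_{w_j ≺ ω|₀^{n-1}, |w_j| > M} |w_j| = 0`. -/
theorem long_return_words_negligible {m : ℕ} [NeZero m] (ω : ℕ → Fin m)
    (ν : Measure (ℕ → Fin m)) [IsProbabilityMeasure ν]
    (hν : Ergodic (fun y n => y (n + 1)) ν)
    (hgen : ∀ f : C(ℕ → Fin m, ℝ),
      Tendsto (fun n => (∑ k ∈ Finset.range n, f (fun i => ω (i + k))) / n)
        atTop (𝓝 (∫ y, f y ∂ν)))
    (h0 : 0 < ν {y | y 0 = 0}) :
    Tendsto (fun M => limsup (fun n => (longReturnWordCount ω M n : ℝ) / n) atTop)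
      atTop (𝓝 0) := by
  classical
  set σ : (ℕ → Fin m) → (ℕ → Fin m) := fun y n => y (n + 1) with hσ
  set B : ℕ → Set (ℕ → Fin m) := fun h => {y | ∀ i < h, y i ≠ 0} with hB
  have hBmeas : ∀ h, MeasurableSet (B h) := by
    intro h
    have : B h = ⋂ i ∈ Set.Iio h, (fun y : ℕ → Fin m => y i) ⁻¹' {0}ᶜ := by
      ext y; simp [hB]
    rw [this]
    exact MeasurableSet.biInter (Set.to_countable _) fun i _ =>
      (measurable_pi_apply i) (measurableSet_singleton (0 : Fin m)).compl
  have hBanti : Antitone B := fun h h' hle y hy i hi => hy i (lt_of_lt_of_le hi hle)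
  set U : Set (ℕ → Fin m) := {y | ∃ i, y i = 0} with hU
  have hUmeas : MeasurableSet U := by
    have : U = ⋃ i, (fun y : ℕ → Fin m => y i) ⁻¹' {0} := by ext y; simp [hU]
    rw [this]
    exact MeasurableSet.iUnion fun i =>
      (measurable_pi_apply i) (measurableSet_singleton (0 : Fin m))
  have hUone : ν U = 1 := by
    have hsub : σ ⁻¹' U ⊆ U := by rintro y ⟨i, hi⟩; exact ⟨i + 1, hi⟩
    have hmeq : ν (σ ⁻¹' U) = ν U :=
      hν.toMeasurePreserving.measure_preimage hUmeas.nullMeasurableSet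
    have hpre : σ ⁻¹' U =ᵐ[ν] U := by
      rw [← measure_symmDiff_eq_zero_iff]
      have : symmDiff (σ ⁻¹' U) U = U \ σ ⁻¹' U := by
        rw [symmDiff_of_le hsub]
      rw [this, measure_diff hsub (hUmeas.preimage hν.measurable).nullMeasurableSet
        (measure_ne_top _ _), hmeq, tsub_self]
    rcases hν.quasiErgodic.ae_empty_or_univ₀ hUmeas.nullMeasurableSet hpre with hc | hc
    · exfalso
      have hz : ν U = 0 := by rw [measure_congr hc]; simp
      have hle : ν {y : ℕ → Fin m | y 0 = 0} ≤ ν U :=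
        measure_mono fun y hy => ⟨0, hy⟩
      rw [hz] at hle
      exact absurd (le_antisymm hle zero_le) (ne_of_gt h0)
    · rw [measure_congr hc]; simp
  have hBinter : ν (⋂ h, B h) = 0 := by
    have hint : (⋂ h, B h) = Uᶜ := by
      ext y
      simp only [Set.mem_iInter, Set.mem_compl_iff, hB, hU, Set.mem_setOf_eq, not_exists]
      constructor
      · intro H i; exact H (i + 1) i (Nat.lt_succ_self i)
      · intro H h i _; exact H i
    rw [hint, measure_compl hUmeas (measure_ne_top _ _), hUone, measure_univ, tsub_self]
  have hBlim : Tendsto (fun h => (ν (B h)).toReal) atTop (𝓝 0) := by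
    have h1 : Tendsto (fun h => ν (B h)) atTop (𝓝 0) := by
      rw [← hBinter]
      exact tendsto_measure_iInter_atTop (fun h => (hBmeas h).nullMeasurableSet) hBanti
        ⟨0, measure_ne_top _ _⟩
    simpa [Function.comp_def] using (ENNReal.tendsto_toReal (by norm_num)).comp h1
  -- frequency convergence and limsup bounds for each M
  have key : ∀ M : ℕ,
      0 ≤ limsup (fun n => (longReturnWordCount ω M n : ℝ) / n) atTop ∧
      limsup (fun n => (longReturnWordCount ω M n : ℝ) / n) atTop
        ≤ 2 * (ν (B (M / 2 + 1))).toReal := by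
    intro M
    set h := M / 2 + 1 with hh
    set u : ℕ → ℝ := fun n => (longReturnWordCount ω M n : ℝ) / n with hu
    set v : ℕ → ℝ := fun n =>
      2 * ((((Finset.range n).filter fun k => ∀ i < h, ω (i + k) ≠ 0).card : ℝ) / n) with hv
    have hvlim : Tendsto v atTop (𝓝 (2 * (ν (B h)).toReal)) :=
      (freq_tendsto ω ν hgen h).const_mul 2
    have hule : ∀ n, u n ≤ v n := by
      intro n
      rcases Nat.eq_zero_or_pos n with rfl | hn
      · simp [hu, hv]
      · have hnat := longReturnWordCount_le_twice ω M n
        have : (longReturnWordCount ω M n : ℝ)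
            ≤ 2 * (((Finset.range n).filter fun k => ∀ i < h, ω (i + k) ≠ 0).card : ℝ) := by
          exact_mod_cast hnat
        simp only [hu, hv, div_eq_mul_inv, mul_assoc]
        have hinv : (0:ℝ) ≤ (n : ℝ)⁻¹ := by positivity
        calc (longReturnWordCount ω M n : ℝ) * (n:ℝ)⁻¹
            ≤ (2 * (((Finset.range n).filter fun k => ∀ i < h, ω (i + k) ≠ 0).card : ℝ)) * (n:ℝ)⁻¹ :=
              mul_le_mul_of_nonneg_right this hinv
          _ = 2 * ((((Finset.range n).filter fun k => ∀ i < h, ω (i + k) ≠ 0).card : ℝ) * (n:ℝ)⁻¹) := by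
              ring
      
    have hvbdd : IsBoundedUnder (· ≤ ·) atTop v := hvlim.isBoundedUnder_le
    have hubdd : IsBoundedUnder (· ≤ ·) atTop u :=
      hvbdd.mono_le (Eventually.of_forall hule)
    have hupos : ∀ n, 0 ≤ u n := fun n => by positivity
    constructor
    · exact le_limsup_of_frequently_le (Frequently.of_forall hupos) hubdd
    · have hucobdd : IsCoboundedUnder (· ≤ ·) atTop u :=
        (isBoundedUnder_of ⟨0, hupos⟩ : IsBoundedUnder (· ≥ ·) atTop u).isCoboundedUnder_le
      calc limsup u atTop ≤ limsup v atTop :=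
            limsup_le_limsup (Eventually.of_forall hule) hucobdd hvbdd
        _ = 2 * (ν (B h)).toReal := hvlim.limsup_eq
  -- squeeze
  have hM2 : Tendsto (fun M : ℕ => M / 2 + 1) atTop atTop :=
    tendsto_atTop_atTop.2 fun b => ⟨2 * b, fun a ha => by omega⟩
  have hmid : Tendsto (fun M : ℕ => 2 * (ν (B (M / 2 + 1))).toReal) atTop (𝓝 0) := by
    simpa using (hBlim.comp hM2).const_mul 2
  exact tendsto_of_tendsto_of_tendsto_of_le_of_le tendsto_const_nhds hmid
    (fun M => (key M).1) (fun M => (key M).2)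
end

section
/- Let ω be a sequence with finite return word set R (all return words to 0), let ℓ = max{|w| : w ∈ R}, and suppose the frequency ν([w]) exists for each w ∈ R. For w ∈ R define S_w^{(0)} = ν([w]) and S_w^{(j)} = ∑_{w ≺ w' ≺ ⋯ ≺ w^{(j)}} N_w(w') N_{w'}(w'') ⋯ N_{w^{(j-1)}}(w^{(j)}) ν([w^{(j)}]) for 1 ≤ j ≤ ℓ − |w| (sum over chains of return words each a proper subword of the next), and S_w^{(j)} = 0 for j > ℓ − |w|. Then the exact frequency F_w exists and F_w = ∑_{j=0}^{ℓ−|w|} (−1)^j S_w^{(j)}. -/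
open Filter Topology

/-- `NOcc u v` is the number of occurrences of the word `u` in the word `v`. -/
def NOcc {m : ℕ} (u v : List (Fin m)) : ℕ :=
  ((Finset.range v.length).filter fun i => (v.drop i).take u.length = u).card

open Classical in
/-- `Schain R ν j w` is the inclusion–exclusion sum
`S_w^{(j)} = ∑_{w ≺ w' ≺ ⋯ ≺ w^{(j)}} N_w(w') ⋯ N_{w^{(j-1)}}(w^{(j)}) ν([w^{(j)}])`
over chains of return words in `R`, each a proper subword of the next
(`S_w^{(0)} = ν([w])`). -/
noncomputable def Schain {m : ℕ} (R : Finset (List (Fin m))) (ν : List (Fin m) → ℝ) :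
    ℕ → List (Fin m) → ℝ
  | 0, w => ν w
  | j + 1, w =>
      ∑ w' ∈ R.filter (fun w' => w <:+: w' ∧ w ≠ w'), (NOcc w w' : ℝ) * Schain R ν j w'

open scoped Classical

section AuxUserLemmas
variable {m : ℕ} {R : Finset (List (Fin m))} {ν : List (Fin m) → ℝ} {L : ℕ}

lemma take_drop_facts {w v : List (Fin m)} {i : ℕ} (hw : w ≠ [])
    (h : (v.drop i).take w.length = w) : i + w.length ≤ v.length := by
  have hlen := congrArg List.length h
  simp only [List.length_take, List.length_drop] at hlen
  have : 0 < w.length := List.length_pos_iff.2 hw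
  omega

lemma take_drop_getElem {w v : List (Fin m)} {i : ℕ}
    (h : (v.drop i).take w.length = w) {r : ℕ} (hr : r < w.length)
    (hiv : i + w.length ≤ v.length) : w[r] = v[i + r] := by
  have h2 := List.getElem_of_eq h.symm hr
  rw [h2, List.getElem_take, List.getElem_drop]

lemma infix_of_take_drop {w v : List (Fin m)} {i : ℕ}
    (h : (v.drop i).take w.length = w) : w <:+: v := by
  rw [← h]
  exact ((v.drop i).take_prefix _).isInfix.trans (v.drop_suffix i).isInfix

lemma NOcc_eq_zero {w v : List (Fin m)} (h : ¬ w <:+: v) : NOcc w v = 0 := by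
  rw [NOcc, Finset.card_eq_zero, Finset.filter_eq_empty_iff]
  intro i _ hi
  exact h (infix_of_take_drop hi)

lemma NOcc_self {w : List (Fin m)} (hw : w ≠ []) : NOcc w w = 1 := by
  rw [NOcc]
  have hpos : 0 < w.length := List.length_pos_iff.2 hw
  have : (Finset.range w.length).filter (fun i => (w.drop i).take w.length = w) = {0} := by
    ext i
    simp only [Finset.mem_filter, Finset.mem_range, Finset.mem_singleton]
    constructor
    · rintro ⟨hi, h⟩
      by_contra hne
      have := congrArg List.length h
      simp only [List.length_take, List.length_drop] at this
      omega
    · rintro rfl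
      simp [hpos]
  rw [this, Finset.card_singleton]

lemma length_lt_of_mem_filter {w w' : List (Fin m)}
    (h : w' ∈ R.filter (fun w' => w <:+: w' ∧ w ≠ w')) : w.length < w'.length := by
  simp only [Finset.mem_filter] at h
  obtain ⟨-, h1, h2⟩ := h
  rcases lt_or_eq_of_le h1.sublist.length_le with hc | hc
  · exact hc
  · exact absurd (h1.sublist.eq_of_length hc) h2

lemma Schain_eq_zero (hlen : ∀ u ∈ R, u.length ≤ L) :
    ∀ j (w : List (Fin m)), w ∈ R → L - w.length < j → Schain R ν j w = 0 := by
  intro j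
  induction j with
  | zero => intro w hw h; omega
  | succ j ih =>
    intro w hw h
    rw [Schain]
    apply Finset.sum_eq_zero
    intro w' hw'
    have h1 : w.length < w'.length := length_lt_of_mem_filter hw'
    have h2 := hlen w' (Finset.mem_filter.1 hw').1
    rw [ih w' (Finset.mem_filter.1 hw').1 (by omega)]
    ring

lemma T_rec (hlen : ∀ u ∈ R, u.length ≤ L) {w : List (Fin m)} (hw : w ∈ R) :
    ∑ j ∈ Finset.range (L - w.length + 1), (-1 : ℝ) ^ j * Schain R ν j w
      = ν w - ∑ w' ∈ R.filter (fun w' => w <:+: w' ∧ w ≠ w'), (NOcc w w' : ℝ) *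
          ∑ j ∈ Finset.range (L - w'.length + 1), (-1 : ℝ) ^ j * Schain R ν j w' := by
  rw [Finset.sum_range_succ']
  have h0 : (-1 : ℝ) ^ 0 * Schain R ν 0 w = ν w := by simp [Schain]
  rw [h0]
  have hstep : ∀ j, (-1 : ℝ) ^ (j + 1) * Schain R ν (j + 1) w
      = -((-1 : ℝ) ^ j * ∑ w' ∈ R.filter (fun w' => w <:+: w' ∧ w ≠ w'),
          (NOcc w w' : ℝ) * Schain R ν j w') := by
    intro j
    rw [Schain, pow_succ]
    ring
  rw [Finset.sum_congr rfl (fun j _ => hstep j), Finset.sum_neg_distrib]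
  have key : ∀ w' ∈ R.filter (fun w' => w <:+: w' ∧ w ≠ w'),
      ∑ j ∈ Finset.range (L - w.length), (-1 : ℝ) ^ j * Schain R ν j w'
        = ∑ j ∈ Finset.range (L - w'.length + 1), (-1 : ℝ) ^ j * Schain R ν j w' := by
    intro w' hw'
    have h1 := length_lt_of_mem_filter hw'
    have h2 := hlen w' (Finset.mem_filter.1 hw').1
    refine (Finset.sum_subset (Finset.range_subset_range.2 (by omega)) ?_).symm
    intro j hj1 hj2
    simp only [Finset.mem_range] at hj1 hj2
    rw [Schain_eq_zero hlen j w' (Finset.mem_filter.1 hw').1 (by omega)]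
    ring
  have swap : ∑ j ∈ Finset.range (L - w.length), (-1 : ℝ) ^ j *
        ∑ w' ∈ R.filter (fun w' => w <:+: w' ∧ w ≠ w'), (NOcc w w' : ℝ) * Schain R ν j w'
      = ∑ w' ∈ R.filter (fun w' => w <:+: w' ∧ w ≠ w'), (NOcc w w' : ℝ) *
        ∑ j ∈ Finset.range (L - w.length), (-1 : ℝ) ^ j * Schain R ν j w' := by
    simp_rw [Finset.mul_sum]
    rw [Finset.sum_comm]
    refine Finset.sum_congr rfl fun w' _ => Finset.sum_congr rfl fun j _ => by ring
  rw [swap, Finset.sum_congr rfl fun w' hw' => by rw [key w' hw']]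
  ring

variable [NeZero m] {ω : ℕ → Fin m}

lemma sandwich_iff (ω : ℕ → Fin m) (w' : List (Fin m)) (p : ℕ) :
    OccursAt (0 :: w' ++ [0]) ω p ↔
      ω p = 0 ∧ (∀ r, (hr : r < w'.length) → ω (p + 1 + r) = w'[r]) ∧
        ω (p + w'.length + 1) = 0 := by
  unfold OccursAt
  simp only [List.cons_append]
  constructor
  · intro h
    refine ⟨?_, ?_, ?_⟩
    · have := h ⟨0, by simp⟩
      simpa using this
    · intro r hr
      have := h ⟨r + 1, by simp; omega⟩
      simp only [List.get_eq_getElem, List.getElem_cons_succ] at this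
      rw [List.getElem_append_left hr] at this
      rw [show p + 1 + r = p + (r + 1) by omega]
      exact this
    · have := h ⟨w'.length + 1, by simp⟩
      simp only [List.get_eq_getElem, List.getElem_cons_succ] at this
      rw [List.getElem_append_right (le_refl w'.length)] at this
      simpa [show p + (w'.length + 1) = p + w'.length + 1 by omega] using this
  · rintro ⟨h0, hm, h1⟩ ⟨i, hi⟩
    simp only [List.length_cons, List.length_append, List.length_singleton, List.length_nil] at hi
    match i with
    | 0 => simpa using h0
    | (r + 1) =>
      by_cases hr : r < w'.length
      · have := hm r hr
        simp only [List.get_eq_getElem, List.getElem_cons_succ]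
        rw [List.getElem_append_left hr]
        rw [show p + (r + 1) = p + 1 + r by omega]
        exact this
      · have hre : r = w'.length := by omega
        subst hre
        simp only [List.get_eq_getElem, List.getElem_cons_succ]
        rw [List.getElem_append_right (le_refl w'.length)]
        simpa [show p + (w'.length + 1) = p + w'.length + 1 by omega] using h1

lemma zero_mem_of {w : List (Fin m)} {r : ℕ} (hr : r < w.length) (h : w[r] = 0) :
    (0 : Fin m) ∈ w := h ▸ List.getElem_mem hr

lemma block_exists (hinf : {n | ω n = 0}.Infinite)
    {w : List (Fin m)} (hww : w ≠ []) (h0w : (0 : Fin m) ∉ w)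
    {j : ℕ} (hocc : OccursAt w ω j) {p₀ : ℕ} (hp₀ : ω p₀ = 0) (hp₀j : p₀ < j) :
    ∃ w' p i, OccursAt (0 :: w' ++ [0]) ω p ∧ w' ≠ [] ∧ (0 : Fin m) ∉ w' ∧
      j = p + 1 + i ∧ i + w.length ≤ w'.length ∧ (w'.drop i).take w.length = w := by
  have hwpos : 0 < w.length := List.length_pos_iff.2 hww
  have hoccE : ∀ r, (hr : r < w.length) → ω (j + r) = w[r] := by
    intro r hr
    have := hocc ⟨r, hr⟩
    simpa using this
  have hwne : ∀ r, (hr : r < w.length) → ω (j + r) ≠ 0 := by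
    intro r hr h
    exact h0w (zero_mem_of hr ((hoccE r hr).symm.trans h))
  -- the zero position just before j
  set p := Nat.findGreatest (fun k => ω k = 0) (j - 1) with hpdef
  have hp : ω p = 0 := Nat.findGreatest_spec (P := fun k => ω k = 0) (show p₀ ≤ j - 1 by omega) hp₀
  have hpj : p < j := by
    have h2 : p ≤ j - 1 := Nat.findGreatest_le (j - 1)
    omega
  have hmax : ∀ k, p < k → k < j → ω k ≠ 0 := by
    intro k hk1 hk2
    exact Nat.findGreatest_is_greatest hk1 (by omega)
  -- the next zero position after p
  have hex : ∃ k, ω (p + 1 + k) = 0 := by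
    obtain ⟨b, hb, hbp⟩ := hinf.exists_gt p
    exact ⟨b - p - 1, by rw [show p + 1 + (b - p - 1) = b by omega]; exact hb⟩
  set q := p + 1 + Nat.find hex with hqdef
  have hq : ω q = 0 := Nat.find_spec hex
  have hqmin : ∀ k, p < k → k < q → ω k ≠ 0 := by
    intro k hk1 hk2 hk
    exact Nat.find_min hex (m := k - p - 1) (by omega)
      (by rw [show p + 1 + (k - p - 1) = k by omega]; exact hk)
  have hjq : j + w.length ≤ q := by
    by_contra hlt
    push_neg at hlt
    rcases lt_or_ge q j with hc | hc
    · exact hmax q (by omega) hc hq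
    · exact hwne (q - j) (by omega) (by rw [show j + (q - j) = q by omega]; exact hq)
  set L := q - p - 1 with hLdef
  have hLpos : 0 < L := by omega
  set w' : List (Fin m) := List.ofFn (fun r : Fin L => ω (p + 1 + r)) with hw'def
  have hw'len : w'.length = L := by simp [hw'def]
  have hw'get : ∀ r, (hr : r < w'.length) → w'[r] = ω (p + 1 + r) := by
    intro r hr
    simp [hw'def]
  have h0w' : (0 : Fin m) ∉ w' := by
    intro hmem
    obtain ⟨r, hr, hre⟩ := List.mem_iff_getElem.1 hmem
    rw [hw'get r hr] at hre
    exact hqmin (p + 1 + r) (by omega) (by rw [hw'len] at hr; omega) hre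
  refine ⟨w', p, j - p - 1, ?_, ?_, h0w', by omega, by omega, ?_⟩
  · rw [sandwich_iff]
    refine ⟨hp, fun r hr => (hw'get r hr).symm, ?_⟩
    rw [hw'len, show p + L + 1 = q by omega]
    exact hq
  · intro h
    rw [h] at hw'len
    simp at hw'len
    omega
  · apply List.ext_getElem
    · simp [hw'len]; omega
    · intro r hr1 hr2
      rw [List.getElem_take, List.getElem_drop, hw'get _ (by simp at hr1; omega)]
      rw [show p + 1 + (j - p - 1 + r) = j + r by omega]
      exact hoccE r hr2

lemma block_unique {w₁ w₂ : List (Fin m)} {p₁ p₂ i₁ i₂ : ℕ}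
    (h₁ : OccursAt (0 :: w₁ ++ [0]) ω p₁) (h01 : (0 : Fin m) ∉ w₁)
    (h₂ : OccursAt (0 :: w₂ ++ [0]) ω p₂) (h02 : (0 : Fin m) ∉ w₂)
    (hi₁ : i₁ < w₁.length) (hi₂ : i₂ < w₂.length)
    (heq : p₁ + 1 + i₁ = p₂ + 1 + i₂) : p₁ = p₂ ∧ w₁ = w₂ := by
  rw [sandwich_iff] at h₁ h₂
  obtain ⟨ha0, ham, ha1⟩ := h₁
  obtain ⟨hb0, hbm, hb1⟩ := h₂
  have hne₁ : ∀ r, (hr : r < w₁.length) → ω (p₁ + 1 + r) ≠ 0 := by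
    intro r hr h
    exact h01 (zero_mem_of hr ((ham r hr).symm.trans h))
  have hne₂ : ∀ r, (hr : r < w₂.length) → ω (p₂ + 1 + r) ≠ 0 := by
    intro r hr h
    exact h02 (zero_mem_of hr ((hbm r hr).symm.trans h))
  have hpp : p₁ = p₂ := by
    rcases lt_trichotomy p₁ p₂ with hc | hc | hc
    · exact (hne₁ (p₂ - p₁ - 1) (by omega)
        (by rw [show p₁ + 1 + (p₂ - p₁ - 1) = p₂ by omega]; exact hb0)).elim
    · exact hc
    · exact (hne₂ (p₁ - p₂ - 1) (by omega)
        (by rw [show p₂ + 1 + (p₁ - p₂ - 1) = p₁ by omega]; exact ha0)).elim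
  subst hpp
  have hll : w₁.length = w₂.length := by
    rcases lt_trichotomy w₁.length w₂.length with hc | hc | hc
    · exact (hne₂ w₁.length hc
        (by rw [show p₁ + 1 + w₁.length = p₁ + w₁.length + 1 by omega]; exact ha1)).elim
    · exact hc
    · exact (hne₁ w₂.length hc
        (by rw [show p₁ + 1 + w₂.length = p₁ + w₂.length + 1 by omega]; exact hb1)).elim
  refine ⟨rfl, List.ext_getElem hll ?_⟩
  intro r hr1 hr2
  rw [← ham r hr1, ← hbm r hr2]

end AuxUserLemmas

noncomputable def cnt {m : ℕ} (ω : ℕ → Fin m) (a : List (Fin m)) (n : ℕ) : ℕ :=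
  ((Finset.range n).filter fun j => OccursAt a ω j).card

section AuxUserCounting
variable {m : ℕ} [NeZero m] {ω : ℕ → Fin m} {R : Finset (List (Fin m))} {ℓ : ℕ}
  {w : List (Fin m)}

/-- The sigma-set of triples `(w', i, p)`. -/
noncomputable def Sig (ω : ℕ → Fin m) (R : Finset (List (Fin m))) (ℓ : ℕ)
    (w : List (Fin m)) (n : ℕ) : Finset (Σ _ : List (Fin m), ℕ × ℕ) :=
  R.sigma fun w' =>
    ((Finset.range ℓ).filter fun i => (w'.drop i).take w.length = w) ×ˢ
      ((Finset.range n).filter fun p => OccursAt (0 :: w' ++ [0]) ω p)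

lemma mem_Sig {n : ℕ} {x : Σ _ : List (Fin m), ℕ × ℕ} :
    x ∈ Sig ω R ℓ w n ↔ x.1 ∈ R ∧ (x.2.1 < ℓ ∧ (x.1.drop x.2.1).take w.length = w) ∧
      (x.2.2 < n ∧ OccursAt (0 :: x.1 ++ [0]) ω x.2.2) := by
  obtain ⟨w', i, p⟩ := x
  simp [Sig, Finset.mem_sigma, Finset.mem_product, Finset.mem_filter, Finset.mem_range,
    and_assoc]

lemma Sig_card (hww : w ≠ []) (hlen : ∀ u ∈ R, u.length ≤ ℓ) (n : ℕ) :
    (Sig ω R ℓ w n).card = ∑ w' ∈ R, NOcc w w' * cnt ω (0 :: w' ++ [0]) n := by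
  rw [Sig, Finset.card_sigma]
  refine Finset.sum_congr rfl fun w' hw' => ?_
  rw [Finset.card_product]
  congr 1
  rw [NOcc]
  congr 1
  ext i
  simp only [Finset.mem_filter, Finset.mem_range]
  constructor
  · rintro ⟨hi, hc⟩
    have := take_drop_facts hww hc
    have hwpos : 0 < w.length := List.length_pos_iff.2 hww
    exact ⟨by omega, hc⟩
  · rintro ⟨hi, hc⟩
    exact ⟨lt_of_lt_of_le hi (hlen w' hw'), hc⟩

lemma counting_upper (hR : ∀ u, u ∈ R ↔ IsReturnWord ω u)
    (hlen : ∀ u ∈ R, u.length ≤ ℓ) (hw : w ∈ R) (n : ℕ) :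
    ∑ w' ∈ R, NOcc w w' * cnt ω (0 :: w' ++ [0]) n ≤ cnt ω w (n + ℓ) := by
  obtain ⟨hww, h0w, -⟩ := (hR w).1 hw
  have hwpos : 0 < w.length := List.length_pos_iff.2 hww
  rw [← Sig_card hww hlen n, cnt]
  apply Finset.card_le_card_of_injOn (fun x => x.2.2 + 1 + x.2.1)
  · intro x hx
    rw [Finset.mem_coe, mem_Sig] at hx
    obtain ⟨hxR, ⟨hiℓ, hc⟩, hpn, hocc⟩ := hx
    obtain ⟨w', i, p⟩ := x
    simp only at hxR hiℓ hc hpn hocc ⊢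
    have hiw : i + w.length ≤ w'.length := take_drop_facts hww hc
    have hsand := (sandwich_iff ω w' p).1 hocc
    simp only [Finset.mem_coe, Finset.mem_filter, Finset.mem_range]
    constructor
    · omega
    · intro ⟨r, hr⟩
      simp only [List.get_eq_getElem]
      rw [take_drop_getElem hc hr hiw]
      rw [show p + 1 + i + r = p + 1 + (i + r) by omega]
      exact hsand.2.1 (i + r) (by omega)
  · intro x hx y hy hxy
    obtain ⟨w₁, i₁, p₁⟩ := x
    obtain ⟨w₂, i₂, p₂⟩ := y
    rw [Finset.mem_coe, mem_Sig] at hx hy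
    simp only at hx hy hxy ⊢
    obtain ⟨hxR, ⟨hi₁, hc₁⟩, hp₁, hocc₁⟩ := hx
    obtain ⟨hyR, ⟨hi₂, hc₂⟩, hp₂, hocc₂⟩ := hy
    have h01 : (0 : Fin m) ∉ w₁ := ((hR w₁).1 hxR).2.1
    have h02 : (0 : Fin m) ∉ w₂ := ((hR w₂).1 hyR).2.1
    have hiw₁ : i₁ + w.length ≤ w₁.length := take_drop_facts hww hc₁
    have hiw₂ : i₂ + w.length ≤ w₂.length := take_drop_facts hww hc₂
    obtain ⟨hpp, hww'⟩ := block_unique hocc₁ h01 hocc₂ h02 (by omega) (by omega) hxy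
    subst hpp hww'
    have hii : i₁ = i₂ := by omega
    subst hii
    rfl

lemma counting_lower (hinf : {n | ω n = 0}.Infinite)
    (hR : ∀ u, u ∈ R ↔ IsReturnWord ω u)
    (hlen : ∀ u ∈ R, u.length ≤ ℓ) (hw : w ∈ R) {p₀ : ℕ} (hp₀ : ω p₀ = 0) (n : ℕ) :
    cnt ω w n ≤ (∑ w' ∈ R, NOcc w w' * cnt ω (0 :: w' ++ [0]) n) + (p₀ + 1) := by
  obtain ⟨hww, h0w, -⟩ := (hR w).1 hw
  have hwpos : 0 < w.length := List.length_pos_iff.2 hww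
  have hD : ((Finset.range n).filter fun j => OccursAt w ω j ∧ p₀ < j).card
      ≤ (Sig ω R ℓ w n).card := by
    apply Finset.card_le_card_of_surjOn (fun x => x.2.2 + 1 + x.2.1)
    intro j hj
    simp only [Finset.coe_filter, Finset.mem_range, Set.mem_setOf_eq] at hj
    obtain ⟨hjn, hocc, hp₀j⟩ := hj
    obtain ⟨w', p, i, hocc', hw'ne, h0w', hj, hiw, hc⟩ :=
      block_exists hinf hww h0w hocc hp₀ hp₀j
    have hw'R : w' ∈ R := (hR w').2 ⟨hw'ne, h0w', p, hocc'⟩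
    refine ⟨⟨w', i, p⟩, ?_, by simp only; omega⟩
    rw [Finset.mem_coe, mem_Sig]
    simp only
    refine ⟨hw'R, ⟨?_, hc⟩, by omega, hocc'⟩
    have := hlen w' hw'R
    omega
  calc cnt ω w n ≤ ((Finset.range n).filter fun j => OccursAt w ω j ∧ p₀ < j).card + (p₀ + 1) := by
        rw [cnt]
        have hsub : (Finset.range n).filter (fun j => OccursAt w ω j)
            ⊆ ((Finset.range n).filter fun j => OccursAt w ω j ∧ p₀ < j) ∪ Finset.range (p₀ + 1) := by
          intro j hj
          simp only [Finset.mem_filter, Finset.mem_range, Finset.mem_union] at hj ⊢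
          by_cases hpj : p₀ < j
          · exact Or.inl ⟨hj.1, hj.2, hpj⟩
          · exact Or.inr (by omega)
        calc ((Finset.range n).filter fun j => OccursAt w ω j).card
            ≤ _ := Finset.card_le_card hsub
          _ ≤ _ + (p₀ + 1) := by
              refine le_trans (Finset.card_union_le _ _) ?_
              simp
    _ ≤ _ := by
        rw [← Sig_card hww hlen n]
        omega

lemma cnt_add_le (a : List (Fin m)) (n k : ℕ) : cnt ω a (n + k) ≤ cnt ω a n + k := by
  unfold cnt
  have : (Finset.range (n + k)).filter (fun j => OccursAt a ω j)
      ⊆ ((Finset.range n).filter fun j => OccursAt a ω j) ∪ Finset.Ico n (n + k) := by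
    intro j hj
    simp only [Finset.mem_filter, Finset.mem_range, Finset.mem_union, Finset.mem_Ico] at hj ⊢
    by_cases hjn : j < n
    · exact Or.inl ⟨hjn, hj.2⟩
    · exact Or.inr ⟨by omega, hj.1⟩
  refine le_trans (Finset.card_le_card this) (le_trans (Finset.card_union_le _ _) ?_)
  simp [Nat.card_Ico]

end AuxUserCounting

/-- If `ω` has a finite return word set `R`, the symbol `0` occurs infinitely often, and the
frequency `ν([w])` exists for every `w ∈ R`, then for each `w ∈ R` the exact frequency `F_w`
(the frequency of `0w0`) exists and equals `∑_{j=0}^{ℓ-|w|} (-1)^j S_w^{(j)}`,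
where `ℓ` is the maximal length of a return word. -/
theorem exact_freq_inclusion_exclusion {m : ℕ} [NeZero m] (ω : ℕ → Fin m)
    (hinf : {n | ω n = 0}.Infinite)
    (R : Finset (List (Fin m))) (hR : ∀ w, w ∈ R ↔ IsReturnWord ω w)
    (ν : List (Fin m) → ℝ) (hν : ∀ w ∈ R, HasFreq w ω (ν w))
    (ℓ : ℕ) (hℓ : ℓ = R.sup List.length)
    (w : List (Fin m)) (hw : w ∈ R) :
    HasFreq (0 :: w ++ [0]) ω
      (∑ j ∈ Finset.range (ℓ - w.length + 1), (-1 : ℝ) ^ j * Schain R ν j w) := by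
  have hlen : ∀ u ∈ R, u.length ≤ ℓ := fun u hu => hℓ ▸ Finset.le_sup hu
  obtain ⟨p₀, hp₀⟩ := hinf.nonempty
  have hp₀' : ω p₀ = 0 := hp₀
  have hbridge : ∀ (a : List (Fin m)) (ρ : ℝ), HasFreq a ω ρ ↔
      Tendsto (fun n => (cnt ω a n : ℝ) / n) atTop (𝓝 ρ) := by
    intro a ρ
    have hc : ∀ n : ℕ,
        (((Finset.range n).filter fun j => ∀ i : Fin a.length, ω (j + i) = a.get i).card : ℝ)
          = (cnt ω a n : ℝ) := by
      intro n
      unfold cnt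
      norm_cast
      congr 1
      exact Finset.filter_congr fun x _ => Iff.rfl
    unfold HasFreq
    exact tendsto_congr fun n => by rw [hc n]
  have main : ∀ k, ∀ u : List (Fin m), u ∈ R → ℓ - u.length = k →
      Tendsto (fun n => (cnt ω (0 :: u ++ [0]) n : ℝ) / n) atTop
        (𝓝 (∑ j ∈ Finset.range (ℓ - u.length + 1), (-1 : ℝ) ^ j * Schain R ν j u)) := by
    intro k
    induction k using Nat.strong_induction_on with
    | _ k ih =>
      intro u hu hk
      obtain ⟨hune, h0u, -⟩ := (hR u).1 hu
      set F := R.filter (fun w' => u <:+: w' ∧ u ≠ w') with hF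
      have hsplit : ∀ n, ∑ w' ∈ R, NOcc u w' * cnt ω (0 :: w' ++ [0]) n
          = cnt ω (0 :: u ++ [0]) n + ∑ w' ∈ F, NOcc u w' * cnt ω (0 :: w' ++ [0]) n := by
        intro n
        rw [← Finset.add_sum_erase R _ hu, NOcc_self hune, one_mul]
        congr 1
        refine (Finset.sum_subset ?_ ?_).symm
        · intro x hx
          simp only [hF, Finset.mem_filter] at hx
          exact Finset.mem_erase.2 ⟨Ne.symm hx.2.2, hx.1⟩
        · intro x hx hxF
          simp only [Finset.mem_erase] at hx
          simp only [hF, Finset.mem_filter] at hxF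
          have : ¬ u <:+: x := fun hinfix => hxF ⟨hx.2, hinfix, Ne.symm hx.1⟩
          rw [NOcc_eq_zero this, zero_mul]
      set err : ℕ → ℝ := fun n => (cnt ω (0 :: u ++ [0]) n : ℝ)
          - ((cnt ω u n : ℝ) - ∑ w' ∈ F, (NOcc u w' : ℝ) * (cnt ω (0 :: w' ++ [0]) n : ℝ))
        with herr
      have herrb : ∀ n : ℕ, |err n| ≤ ((p₀ : ℝ) + 1 + ℓ) := by
        intro n
        have h1 := counting_upper hR hlen hu n
        have h1' := cnt_add_le (ω := ω) u n ℓ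
        have h2 := counting_lower hinf hR hlen hu hp₀' n
        rw [hsplit n] at h1 h2
        have hA : ((cnt ω (0 :: u ++ [0]) n : ℝ)
            + ∑ w' ∈ F, (NOcc u w' : ℝ) * (cnt ω (0 :: w' ++ [0]) n : ℝ))
            ≤ (cnt ω u n : ℝ) + ℓ := by
          have := le_trans h1 h1'
          push_cast at this ⊢
          exact_mod_cast this
        have hB : (cnt ω u n : ℝ) ≤ ((cnt ω (0 :: u ++ [0]) n : ℝ)
            + ∑ w' ∈ F, (NOcc u w' : ℝ) * (cnt ω (0 :: w' ++ [0]) n : ℝ)) + ((p₀ : ℝ) + 1) := by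
          push_cast
          exact_mod_cast h2
        rw [herr, abs_le]
        constructor <;> simp only <;> linarith
      have herr0 : Tendsto (fun n => err n / n) atTop (𝓝 0) := by
        refine squeeze_zero_norm (fun n => ?_)
          (tendsto_const_div_atTop_nhds_zero_nat ((p₀ : ℝ) + 1 + ℓ))
        rcases Nat.eq_zero_or_pos n with rfl | hn
        · simp
        · rw [Real.norm_eq_abs, abs_div, abs_of_nonneg (by positivity : (0 : ℝ) ≤ (n : ℝ))]
          have hpos : (0 : ℝ) < (n : ℝ) := by exact_mod_cast hn
          gcongr
          exact herrb n
      have hsum : Tendsto (fun n => ∑ w' ∈ F, (NOcc u w' : ℝ) * ((cnt ω (0 :: w' ++ [0]) n : ℝ) / n))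
          atTop (𝓝 (∑ w' ∈ F, (NOcc u w' : ℝ) *
            (∑ j ∈ Finset.range (ℓ - w'.length + 1), (-1 : ℝ) ^ j * Schain R ν j w'))) := by
        apply tendsto_finset_sum
        intro w' hw'
        have hmem : w' ∈ R := (Finset.mem_filter.1 hw').1
        have hlt : ℓ - w'.length < k := by
          have h1 := length_lt_of_mem_filter hw'
          have h2 := hlen w' hmem
          omega
        exact (ih _ hlt w' hmem rfl).const_mul _
      have hcu : Tendsto (fun n => (cnt ω u n : ℝ) / n) atTop (𝓝 (ν u)) :=
        (hbridge u (ν u)).1 (hν u hu)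
      have hfinal := (hcu.sub hsum).add herr0
      rw [add_zero] at hfinal
      rw [T_rec (ν := ν) hlen hu]
      have hfun : ∀ n : ℕ, ((cnt ω u n : ℝ) / n
            - ∑ w' ∈ F, (NOcc u w' : ℝ) * ((cnt ω (0 :: w' ++ [0]) n : ℝ) / n)) + err n / n
          = (cnt ω (0 :: u ++ [0]) n : ℝ) / n := by
        intro n
        have hs : ∑ w' ∈ F, (NOcc u w' : ℝ) * ((cnt ω (0 :: w' ++ [0]) n : ℝ) / n)
            = (∑ w' ∈ F, (NOcc u w' : ℝ) * (cnt ω (0 :: w' ++ [0]) n : ℝ)) / n := by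
          rw [Finset.sum_div]
          exact Finset.sum_congr rfl fun _ _ => (mul_div_assoc _ _ _).symm
        rw [herr, hs]
        ring
      exact (tendsto_congr hfun).1 hfinal
  rw [hbridge]
  exact main (ℓ - w.length) w hw rfl
end
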